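/- arXiv:1503.04617 — 11 statements merged into one kernel-verified Lean document; each statement's English description precedes it below -/
import Mathlib

section
/- Let T be a finite tree whose vertices are properly 2-colored black and white. If every leaf of T is white, then the number of white vertices of T is strictly larger than the number of black vertices of T. -/
/-- Let `T` be a finite tree (connected acyclic graph) whose vertices are
properly 2-colored black and white (here `c v = true` means white, `c v = false` black).
If every leaf (vertex of degree at most 1) is white, then the number of white vertices
is strictly larger than the number of black vertices. -/
theorem tree_all_leaves_white_more_white
    {V : Type*} [Fintype V] [DecidableEq V]
    (G : SimpleGraph V) [DecidableRel G.Adj]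
    (hconn : G.Connected) (hacyc : G.IsAcyclic)
    (c : V → Bool)
    (hproper : ∀ v w, G.Adj v w → c v ≠ c w)
    (hleaf : ∀ v, G.degree v ≤ 1 → c v = true) :
    (Finset.univ.filter fun v => c v = false).card <
      (Finset.univ.filter fun v => c v = true).card := by
  classical
  set B := Finset.univ.filter fun v => c v = false with hB
  set W := Finset.univ.filter fun v => c v = true with hW
  have htree : G.IsTree := ⟨hconn, hacyc⟩
  have hcardE : G.edgeFinset.card + 1 = Fintype.card V := htree.card_edgeFinset
  have hpos : 0 < Fintype.card V := @Fintype.card_pos _ _ hconn.nonempty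
  have hBW : B.card + W.card = Fintype.card V := by
    have := Finset.card_filter_add_card_filter_not
      (s := (Finset.univ : Finset V)) (p := fun v => c v = false)
    simpa [hB, hW, Finset.card_univ] using this
  have hdeg : ∀ v, G.degree v = ∑ w, if G.Adj v w then 1 else 0 := by
    intro v
    rw [SimpleGraph.degree, SimpleGraph.neighborFinset_eq_filter, Finset.card_filter]
  -- sum of degrees over B equals sum over W
  have hsum : ∑ v ∈ B, G.degree v = ∑ v ∈ W, G.degree v := by
    have h1 : ∑ v ∈ B, G.degree v
        = ∑ v, ∑ w, if G.Adj v w ∧ c v = false then 1 else 0 := by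
      rw [hB, Finset.sum_filter]
      refine Finset.sum_congr rfl fun v _ => ?_
      by_cases h : c v = false <;> simp [h, hdeg]
    have h2 : ∑ v ∈ W, G.degree v
        = ∑ v, ∑ w, if G.Adj v w ∧ c v = true then 1 else 0 := by
      rw [hW, Finset.sum_filter]
      refine Finset.sum_congr rfl fun v _ => ?_
      by_cases h : c v = true <;> simp [h, hdeg]
    rw [h1, h2, Finset.sum_comm]
    refine Finset.sum_congr rfl fun v _ => Finset.sum_congr rfl fun w _ => ?_
    by_cases hadj : G.Adj v w
    · have hne := hproper v w hadj
      have : (c w = false) ↔ (c v = true) := by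
        cases hv : c v <;> cases hw : c w <;> simp_all
      simp [hadj.symm, hadj, this]
    · have hadj' : ¬ G.Adj w v := fun h => hadj h.symm
      simp [hadj, hadj']
  -- total degree sum
  have htot : ∑ v ∈ B, G.degree v + ∑ v ∈ W, G.degree v = 2 * G.edgeFinset.card := by
    have := SimpleGraph.sum_degrees_eq_twice_card_edges G
    have hsplit : ∑ v ∈ B, G.degree v + ∑ v ∈ W, G.degree v = ∑ v, G.degree v := by
      rw [hB, hW]
      have := Finset.sum_filter_add_sum_filter_not (Finset.univ : Finset V)
        (fun v => c v = false) (fun v => G.degree v)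
      simpa using this
    omega
  have hEB : ∑ v ∈ B, G.degree v + 1 = Fintype.card V := by omega
  -- each black vertex has degree ≥ 2
  have hdeg2 : ∀ v ∈ B, 2 ≤ G.degree v := by
    intro v hv
    rw [hB, Finset.mem_filter] at hv
    by_contra h
    have : G.degree v ≤ 1 := by omega
    have := hleaf v this
    simp_all
  have hlow : 2 * B.card ≤ ∑ v ∈ B, G.degree v := by
    calc 2 * B.card = ∑ _v ∈ B, 2 := by rw [Finset.sum_const]; ring
    _ ≤ ∑ v ∈ B, G.degree v := Finset.sum_le_sum hdeg2
  omega
end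

section
/- Every finite bicolored tree with equally many black and white vertices (a balanced tree) has at least one white leaf and at least one black leaf. -/
lemma color_degree_sum {V : Type*} [Fintype V] [DecidableEq V]
    (G : SimpleGraph V) [DecidableRel G.Adj]
    (c : V → Bool) (hproper : ∀ v w, G.Adj v w → c v ≠ c w) (b : Bool) :
    ∑ v ∈ Finset.univ.filter (fun v => c v = b), G.degree v = G.edgeFinset.card := by
  have h : ∀ v, G.degree v = (G.edgeFinset.filter (fun e => v ∈ e)).card := by
    intro v
    rw [← SimpleGraph.card_incidenceFinset_eq_degree, SimpleGraph.incidenceFinset_eq_filter]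
  have key : ∀ (z w : V), z ≠ w → c z = b → c w ≠ b →
      Finset.filter (fun i => i ∈ s(z, w)) (Finset.univ.filter (fun v => c v = b)) = {z} := by
    intro z w hzw hz hw
    ext v
    simp only [Finset.mem_filter, Finset.mem_univ, true_and, Finset.mem_singleton, Sym2.mem_iff]
    constructor
    · rintro ⟨hv, rfl | rfl⟩
      · rfl
      · exact absurd hv hw
    · rintro rfl; exact ⟨hz, Or.inl rfl⟩
  simp_rw [h, Finset.card_filter]
  rw [Finset.sum_comm]
  rw [Finset.sum_congr rfl (g := fun _ => 1)]
  · simp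
  intro e he
  rw [← Finset.card_filter]
  rw [SimpleGraph.mem_edgeFinset] at he
  induction e with
  | h x y =>
    have hadj : G.Adj x y := he
    have hne : c x ≠ c y := hproper x y hadj
    have hxy : x ≠ y := hadj.ne
    by_cases hx : c x = b
    · rw [key x y hxy hx (fun h => hne (hx.trans h.symm))]; simp
    · rw [Sym2.eq_swap, key y x hxy.symm ?_ hx]
      · simp
      · revert hx hne; cases b <;> cases c x <;> cases c y <;> simp

/-- Every finite bicolored tree (connected acyclic graph with a proper
2-coloring, `true` = white, `false` = black) with equally many black and white vertices
has at least one white leaf and at least one black leaf (a leaf is a vertex of degree ≤ 1). -/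
theorem balanced_tree_has_white_and_black_leaf
    {V : Type*} [Fintype V] [DecidableEq V]
    (G : SimpleGraph V) [DecidableRel G.Adj]
    (hconn : G.Connected) (hacyc : G.IsAcyclic)
    (c : V → Bool)
    (hproper : ∀ v w, G.Adj v w → c v ≠ c w)
    (hbal : (Finset.univ.filter fun v => c v = true).card =
      (Finset.univ.filter fun v => c v = false).card) :
    (∃ v, G.degree v ≤ 1 ∧ c v = true) ∧ (∃ v, G.degree v ≤ 1 ∧ c v = false) := by
  have htree : G.IsTree := ⟨hconn, hacyc⟩
  have hedge : G.edgeFinset.card + 1 = Fintype.card V := htree.card_edgeFinset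
  have hpart : (Finset.univ.filter fun v => c v = true).card +
      (Finset.univ.filter fun v => c v = false).card = Fintype.card V := by
    rw [← Finset.card_union_of_disjoint]
    · congr 1
      ext v
      simp only [Finset.mem_union, Finset.mem_filter, Finset.mem_univ, true_and]
      cases c v <;> simp
    · rw [Finset.disjoint_filter]
      intro v _ hv
      simp [hv]
  have hne : Nonempty V := hconn.nonempty
  have hcardpos : 0 < Fintype.card V := Fintype.card_pos
  have main : ∀ b : Bool,
      (Finset.univ.filter fun v => c v = b).card * 2 = G.edgeFinset.card + 1 →
      ∃ v, G.degree v ≤ 1 ∧ c v = b := by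
    intro b hb
    by_contra hcon
    push_neg at hcon
    have h2 : ∀ v ∈ Finset.univ.filter (fun v => c v = b), 2 ≤ G.degree v := by
      intro v hv
      rw [Finset.mem_filter] at hv
      by_contra hd
      exact hcon v (by omega) hv.2
    have hsum : 2 * (Finset.univ.filter fun v => c v = b).card ≤
        ∑ v ∈ Finset.univ.filter (fun v => c v = b), G.degree v := by
      calc 2 * (Finset.univ.filter fun v => c v = b).card
          = ∑ _v ∈ Finset.univ.filter (fun v => c v = b), 2 := by
            rw [Finset.sum_const, smul_eq_mul, mul_comm]
        _ ≤ _ := Finset.sum_le_sum h2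
    rw [color_degree_sum G c hproper b] at hsum
    omega
  constructor
  · exact main true (by omega)
  · exact main false (by omega)
end

section
/- If G is a finite connected bipartite graph with n black and n white vertices (n ≥ 1), then the graph G × I_{2n-1} (the 'prism' of G of height 2n-1) admits a perfect matching. -/
open SimpleGraph Finset

universe u

/-- The prism `G × I m`: vertices `V × Fin m`, with an edge between `(v,j)` and `(v,j+1)`
and an edge between `(v,j)` and `(w,j)` whenever `vw` is an edge of `G`. -/
def prism {V : Type*} (G : SimpleGraph V) (m : ℕ) : SimpleGraph (V × Fin m) where
  Adj p q := (p.1 = q.1 ∧ (p.2.val + 1 = q.2.val ∨ q.2.val + 1 = p.2.val)) ∨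
    (G.Adj p.1 q.1 ∧ p.2 = q.2)
  symm := by
    constructor
    rintro ⟨v, j⟩ ⟨w, k⟩ (⟨h1, h2⟩ | ⟨h1, h2⟩)
    · exact Or.inl ⟨h1.symm, h2.symm⟩
    · exact Or.inr ⟨h1.symm, h2.symm⟩
  loopless := by
    constructor
    rintro ⟨v, j⟩ (⟨-, h | h⟩ | ⟨h, -⟩)
    · omega
    · omega
    · exact G.irrefl h


lemma matching_of_involution {α : Type*} (H : SimpleGraph α) (f : α → α)
    (hf : Function.Involutive f) (hadj : ∀ a, H.Adj a (f a)) :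
    ∃ M : H.Subgraph, M.IsPerfectMatching := by
  refine ⟨{ verts := Set.univ, Adj := fun a b => f a = b ∨ f b = a,
            adj_sub := ?_, edge_vert := fun _ => trivial, symm := ?_ }, ?_⟩
  · rintro a b (rfl | h)
    · exact hadj a
    · exact (h ▸ hadj b).symm
  · constructor
    rintro a b (rfl | h)
    · exact Or.inr rfl
    · exact Or.inl h
  · rw [SimpleGraph.Subgraph.isPerfectMatching_iff]
    intro v
    refine ⟨f v, Or.inl rfl, ?_⟩
    rintro w (rfl | h)
    · rfl
    · rw [← h, hf w]

lemma delete_edge_connected {V : Type*} {G : SimpleGraph V} {u v : V}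
    (h : G.Connected) (hr : (G \ fromEdgeSet {s(u, v)}).Reachable u v) :
    (G \ fromEdgeSet {s(u, v)}).Connected := by
  have key : ∀ {a b : V} (_ : G.Walk a b), (G \ fromEdgeSet {s(u, v)}).Reachable a b := by
    intro a b W
    induction W with
    | nil => exact Reachable.refl _
    | cons hadj q ih =>
      rename_i c d e
      refine Reachable.trans ?_ ih
      by_cases he : s(c, d) = s(u, v)
      · rw [Sym2.eq_iff] at he
        rcases he with ⟨rfl, rfl⟩ | ⟨rfl, rfl⟩
        · exact hr
        · exact hr.symm
      · exact Adj.reachable (by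
          rw [sdiff_adj, fromEdgeSet_adj]
          exact ⟨hadj, fun hc => he hc.1⟩)
  have hne := h.nonempty
  exact ⟨fun a b => (h.preconnected a b).elim fun W => key W⟩

lemma exists_spanning_tree_aux {V : Type*} [Fintype V] :
    ∀ (k : ℕ) (G : SimpleGraph V), G.edgeSet.ncard ≤ k → G.Connected →
      ∃ T, T ≤ G ∧ T.Connected ∧ T.IsAcyclic := by
  intro k
  induction k with
  | zero =>
    intro G hcard hconn
    refine ⟨G, le_refl _, hconn, ?_⟩
    rw [isAcyclic_iff_forall_edge_isBridge]
    intro e he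
    exfalso
    have : G.edgeSet = ∅ := Set.ncard_eq_zero (Set.toFinite _) |>.mp (Nat.le_zero.mp hcard)
    simp [this] at he
  | succ k ih =>
    intro G hcard hconn
    by_cases hac : G.IsAcyclic
    · exact ⟨G, le_refl _, hconn, hac⟩
    · rw [isAcyclic_iff_forall_edge_isBridge] at hac
      push_neg at hac
      obtain ⟨e, he, hbr⟩ := hac
      induction e with
      | h u v =>
        rw [SimpleGraph.isBridge_iff] at hbr
        push_neg at hbr
        have hr := hbr
        have hconn' := delete_edge_connected hconn hr
        have hedge : (G \ fromEdgeSet {s(u, v)}).edgeSet = G.edgeSet \ {s(u, v)} := by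
          simp [edgeSet_sdiff, edgeSet_fromEdgeSet, edgeSet_sdiff_sdiff_isDiag]
        have hlt : (G \ fromEdgeSet {s(u, v)}).edgeSet.ncard ≤ k := by
          rw [hedge]
          have : (G.edgeSet \ {s(u, v)}).ncard < G.edgeSet.ncard :=
            Set.ncard_diff_singleton_lt_of_mem he (Set.toFinite _)
          omega
        obtain ⟨T, hT, h1, h2⟩ := ih _ hlt hconn'
        exact ⟨T, le_trans hT sdiff_le, h1, h2⟩


lemma getVert_inj {V : Type*} {G : SimpleGraph V} {u v : V} (p : G.Walk u v) :
    p.IsPath → ∀ i j : ℕ, i ≤ p.length → j ≤ p.length → p.getVert i = p.getVert j → i = j := by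
  induction p with
  | nil => intro _ i j hi hj _; simp at hi hj; omega
  | cons h q ih =>
    rename_i a b w
    intro hp i j hi hj heq
    rw [SimpleGraph.Walk.cons_isPath_iff] at hp
    match i, j with
    | 0, 0 => rfl
    | 0, j + 1 =>
      exfalso
      apply hp.2
      rw [SimpleGraph.Walk.mem_support_iff_exists_getVert]
      exact ⟨j, (by simpa [SimpleGraph.Walk.getVert_cons_succ] using heq.symm), by simpa using hj⟩
    | i + 1, 0 =>
      exfalso
      apply hp.2
      rw [SimpleGraph.Walk.mem_support_iff_exists_getVert]
      exact ⟨i, (by simpa [SimpleGraph.Walk.getVert_cons_succ] using heq), by simpa using hi⟩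
    | i + 1, j + 1 =>
      have := ih hp.1 i j (by simpa using hi) (by simpa using hj)
        (by simpa [SimpleGraph.Walk.getVert_cons_succ] using heq)
      omega

lemma walk_color {V : Type*} {G : SimpleGraph V} (c : V → Bool)
    (hproper : ∀ v w, G.Adj v w → c v ≠ c w) {u v : V} (p : G.Walk u v) :
    ∀ i : ℕ, i ≤ p.length → c (p.getVert i) = (if Even i then c u else !(c u)) := by
  induction p with
  | nil => intro i hi; simp at hi; simp [hi]
  | cons h q ih =>
    rename_i a b w
    intro i hi
    match i with
    | 0 => simp
    | i + 1 =>
      rw [SimpleGraph.Walk.getVert_cons_succ]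
      rw [ih i (by simpa using hi)]
      have hcb : c b = !(c a) := by
        have := hproper _ _ h
        revert this; cases (c a) <;> cases (c b) <;> simp
      rw [hcb]
      rcases Nat.even_or_odd i with he | ho
      · rw [if_pos he, if_neg (by simp [Nat.even_add_one, he])]
      · have hne : ¬ Even i := Nat.not_even_iff_odd.mpr ho
        rw [if_neg hne, if_pos (by simp [Nat.even_add_one, hne]), Bool.not_not]

lemma walk_odd_length {V : Type*} {G : SimpleGraph V} (c : V → Bool)
    (hproper : ∀ v w, G.Adj v w → c v ≠ c w) {u v : V} (p : G.Walk u v)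
    (huv : c u ≠ c v) : Odd p.length := by
  have := walk_color c hproper p p.length le_rfl
  rw [p.getVert_length] at this
  rcases Nat.even_or_odd p.length with he | ho
  · rw [if_pos he] at this; exact absurd this.symm huv
  · exact ho

lemma interior_two_le_degree {V : Type*} [Fintype V] [DecidableEq V] {G : SimpleGraph V}
    [DecidableRel G.Adj] {u v z : V} (p : G.Walk u v) (hp : p.IsPath) (hz : z ∈ p.support)
    (hzu : z ≠ u) (hzv : z ≠ v) : 2 ≤ G.degree z := by
  set q := p.takeUntil z hz with hq
  set r := p.dropUntil z hz with hr
  have hspec : q.append r = p := p.take_spec hz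
  have hp' : (q.append r).IsPath := hspec ▸ hp
  have hnodup := hp'.support_nodup
  rw [SimpleGraph.Walk.support_append, List.nodup_append] at hnodup
  have hqnil : ¬ q.Nil := SimpleGraph.Walk.not_nil_of_ne (Ne.symm hzu)
  have hrnil : ¬ r.Nil := SimpleGraph.Walk.not_nil_of_ne hzv
  have hqrnil : ¬ q.reverse.Nil := SimpleGraph.Walk.not_nil_of_ne hzu
  set a := q.reverse.getVert 1 with ha
  set b := r.getVert 1 with hb
  have hadja : G.Adj z a := q.reverse.adj_snd hqrnil
  have hadjb : G.Adj z b := r.adj_snd hrnil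
  have hamem : a ∈ q.support := by
    have : a ∈ q.reverse.support := by
      rw [SimpleGraph.Walk.mem_support_iff_exists_getVert]
      refine ⟨1, rfl, ?_⟩
      rw [SimpleGraph.Walk.length_reverse]
      have := SimpleGraph.Walk.not_nil_iff_lt_length.mp hqnil
      omega
    rwa [SimpleGraph.Walk.support_reverse, List.mem_reverse] at this
  have hbmem : b ∈ r.support.tail := by
    rw [← SimpleGraph.Walk.support_tail_of_not_nil r hrnil]
    exact SimpleGraph.Walk.start_mem_support _
  have hab : a ≠ b := fun hcon => hnodup.2.2 a hamem b hbmem hcon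
  have hsub : {a, b} ⊆ G.neighborFinset z := by
    intro t ht
    rw [SimpleGraph.mem_neighborFinset]
    rcases Finset.mem_insert.mp ht with rfl | ht
    · exact hadja
    · rw [Finset.mem_singleton.mp ht]; exact hadjb
  calc 2 = ({a, b} : Finset V).card := (Finset.card_pair hab).symm
    _ ≤ (G.neighborFinset z).card := Finset.card_le_card hsub
    _ = G.degree z := rfl

lemma reachable_induce {V : Type*} {G : SimpleGraph V} {s : Set V} {a b : V}
    (p : G.Walk a b) :
    (∀ z ∈ p.support, z ∈ s) → ∀ (ha : a ∈ s) (hb : b ∈ s),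
      (G.induce s).Reachable ⟨a, ha⟩ ⟨b, hb⟩ := by
  induction p with
  | nil => intro _ ha hb; exact Reachable.refl _
  | cons h q ih =>
    rename_i x y w
    intro hsup ha hb
    have hy : y ∈ s := hsup y (by simp [SimpleGraph.Walk.support_cons])
    refine Reachable.trans (Adj.reachable ?_)
      (ih (fun z hz => hsup z (by simp [SimpleGraph.Walk.support_cons, hz])) hy hb)
    exact h

lemma exists_leaf {V : Type*} [Fintype V] [DecidableEq V] {G : SimpleGraph V}
    [DecidableRel G.Adj] (htree : G.IsTree) (c : V → Bool)
    (hproper : ∀ v w, G.Adj v w → c v ≠ c w) (b : Bool) (n : ℕ)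
    (hb : (univ.filter fun v => c v = b).card = n)
    (hnb : (univ.filter fun v => c v = !b).card = n) (hn : 1 ≤ n) :
    ∃ x, c x = b ∧ G.degree x ≤ 1 := by
  by_contra hcon
  push_neg at hcon
  have hdeg : ∀ x, c x = b → 2 ≤ G.degree x := fun x hx => hcon x hx
  have hcardV : Fintype.card V = 2 * n := by
    have h := Finset.card_filter_add_card_filter_not (s := (univ : Finset V))
      (p := fun v => c v = b)
    have hffilter : (univ.filter fun v => ¬ (c v = b)) = (univ.filter fun v => c v = !b) := by
      apply Finset.filter_congr
      intro x _
      cases (c x) <;> cases b <;> simp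
    rw [hffilter, hb, hnb] at h
    rw [← Finset.card_univ, ← h]
    omega
  have hedges := htree.card_edgeFinset
  -- darts double counting
  set S : Finset G.Dart := univ.filter (fun d => c d.fst = b) with hS
  have h1 : S.card = ∑ v ∈ univ.filter (fun v => c v = b), G.degree v := by
    rw [Finset.card_eq_sum_card_fiberwise
      (f := fun d : G.Dart => d.fst) (t := univ.filter (fun v => c v = b))
      (fun d hd => by
        simp only [hS, Finset.mem_coe, Finset.mem_filter, Finset.mem_univ, true_and] at hd ⊢
        exact hd)]
    refine Finset.sum_congr rfl ?_
    intro v hv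
    rw [Finset.mem_filter] at hv
    have heq : S.filter (fun d => d.fst = v) = univ.filter (fun d => d.fst = v) := by
      ext d
      simp only [hS, Finset.mem_filter, Finset.mem_univ, true_and, and_iff_right_iff_imp]
      intro hd; rw [hd, hv.2]
    rw [heq, G.dart_fst_fiber_card_eq_degree]
  have hlower : 2 * n ≤ S.card := by
    rw [h1]
    calc 2 * n = ∑ _v ∈ univ.filter (fun v => c v = b), 2 := by
          rw [Finset.sum_const, hb]; ring
      _ ≤ _ := Finset.sum_le_sum (fun v hv => hdeg v (Finset.mem_filter.mp hv).2)
  have hupper : S.card ≤ G.edgeFinset.card := by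
    refine Finset.card_le_card_of_injOn (fun d => d.edge) ?_ ?_
    · intro d hd
      rw [Finset.mem_coe, SimpleGraph.mem_edgeFinset]
      exact d.edge_mem
    · intro d1 hd1 d2 hd2 hedge
      rcases (G.dart_edge_eq_iff d1 d2).mp hedge with h | h
      · exact h
      · exfalso
        rw [Finset.mem_coe, hS, Finset.mem_filter] at hd1 hd2
        have hc2 : c d2.snd = b := by rw [← hd1.2, h]; rfl
        exact hproper _ _ d2.adj (by rw [hd2.2, hc2])
  omega

lemma extend_involution {V : Type*} [DecidableEq V] (T : SimpleGraph V)
    (x y : V) (p : T.Walk x y) (hp : p.IsPath) (hLodd : Odd p.length)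
    (m : ℕ) (hm : Odd m) (s : Set V) (hmem : ∀ v, v ∈ s ↔ (v ≠ x ∧ v ≠ y))
    (f' : (↥s × Fin m) → (↥s × Fin m))
    (hf' : Function.Involutive f')
    (hadj' : ∀ q, (prism (T.induce s) m).Adj q (f' q)) :
    ∃ f : V × Fin (m + 2) → V × Fin (m + 2),
      Function.Involutive f ∧ ∀ q, (prism T (m + 2)).Adj q (f q) := by
  classical
  set L := p.length with hLdef
  have hL1 : 1 ≤ L := hLodd.pos
  have hm1 : 1 ≤ m := hm.pos
  have w0 : p.getVert 0 = x := p.getVert_zero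
  have wL : p.getVert L = y := p.getVert_length
  have winj : ∀ i j : ℕ, i ≤ L → j ≤ L → p.getVert i = p.getVert j → i = j :=
    getVert_inj p hp
  have hxy : x ≠ y := by
    intro h
    have := winj 0 L (by omega) le_rfl (by rw [w0, wL, h])
    omega
  have hEL1 : Even (L - 1) := Nat.Odd.sub_odd hLodd odd_one
  have hIntS : ∀ i, 1 ≤ i → i ≤ L - 1 → p.getVert i ≠ x ∧ p.getVert i ≠ y := by
    intro i h1 h2
    constructor
    · intro h; have := winj i 0 (by omega) (by omega) (by rw [w0, h]); omega
    · intro h; have := winj i L (by omega) le_rfl (by rw [wL, h]); omega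
  set idx : V → ℕ := fun v =>
    if h : ∃ i, 1 ≤ i ∧ i ≤ L - 1 ∧ p.getVert i = v then Classical.choose h else 0 with hidx
  have idx_spec : ∀ v (h : ∃ i, 1 ≤ i ∧ i ≤ L - 1 ∧ p.getVert i = v),
      1 ≤ idx v ∧ idx v ≤ L - 1 ∧ p.getVert (idx v) = v := by
    intro v hv
    rw [hidx]
    simp only [dif_pos hv]
    exact Classical.choose_spec hv
  have Int_getVert : ∀ i, 1 ≤ i → i ≤ L - 1 →
      ∃ i', 1 ≤ i' ∧ i' ≤ L - 1 ∧ p.getVert i' = p.getVert i := fun i h1 h2 => ⟨i, h1, h2, rfl⟩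
  have idx_eq : ∀ i, 1 ≤ i → i ≤ L - 1 → idx (p.getVert i) = i := by
    intro i h1 h2
    obtain ⟨a1, a2, a3⟩ := idx_spec _ (Int_getVert i h1 h2)
    exact winj _ i (by omega) (by omega) a3
  have hadjT : ∀ i, i < L → T.Adj (p.getVert i) (p.getVert (i + 1)) :=
    fun i hi => p.adj_getVert_succ hi
  -- data-level versions of f'
  set φv : V → ℕ → V := fun v j =>
    if h : (v ≠ x ∧ v ≠ y) ∧ j < m then
      ((f' (⟨v, (hmem v).mpr h.1⟩, ⟨j, h.2⟩)).1 : V) else v with hφv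
  set φj : V → ℕ → ℕ := fun v j =>
    if h : (v ≠ x ∧ v ≠ y) ∧ j < m then
      ((f' (⟨v, (hmem v).mpr h.1⟩, ⟨j, h.2⟩)).2 : ℕ) else j with hφj
  have φspec : ∀ v j (hv : v ≠ x ∧ v ≠ y) (hj : j < m),
      (φv v j ≠ x ∧ φv v j ≠ y) ∧ φj v j < m ∧
      φv (φv v j) (φj v j) = v ∧ φj (φv v j) (φj v j) = j ∧
      ((φv v j = v ∧ (j + 1 = φj v j ∨ φj v j + 1 = j)) ∨
        (T.Adj v (φv v j) ∧ φj v j = j)) := by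
    intro v j hv hj
    have e1 : φv v j = ((f' (⟨v, (hmem v).mpr hv⟩, ⟨j, hj⟩)).1 : V) := by
      rw [hφv]; simp only [dif_pos (And.intro hv hj)]
    have e2 : φj v j = ((f' (⟨v, (hmem v).mpr hv⟩, ⟨j, hj⟩)).2 : ℕ) := by
      rw [hφj]; simp only [dif_pos (And.intro hv hj)]
    have hprop : φv v j ≠ x ∧ φv v j ≠ y := by
      rw [e1]; exact (hmem _).mp (f' (⟨v, (hmem v).mpr hv⟩, ⟨j, hj⟩)).1.2
    have hjlt : φj v j < m := by rw [e2]; exact (f' (⟨v, (hmem v).mpr hv⟩, ⟨j, hj⟩)).2.isLt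
    refine ⟨hprop, hjlt, ?_, ?_, ?_⟩
    · have e3 : φv (φv v j) (φj v j)
          = ((f' (⟨φv v j, (hmem _).mpr hprop⟩, ⟨φj v j, hjlt⟩)).1 : V) := by
        exact dif_pos (And.intro hprop hjlt)
      rw [e3]
      have harg : (⟨φv v j, (hmem _).mpr hprop⟩, (⟨φj v j, hjlt⟩ : Fin m))
          = f' (⟨v, (hmem v).mpr hv⟩, ⟨j, hj⟩) := by
        apply Prod.ext
        · exact Subtype.ext e1
        · exact Fin.ext e2
      rw [harg, hf']
    · have e3 : φj (φv v j) (φj v j)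
          = ((f' (⟨φv v j, (hmem _).mpr hprop⟩, ⟨φj v j, hjlt⟩)).2 : ℕ) := by
        exact dif_pos (And.intro hprop hjlt)
      rw [e3]
      have harg : (⟨φv v j, (hmem _).mpr hprop⟩, (⟨φj v j, hjlt⟩ : Fin m))
          = f' (⟨v, (hmem v).mpr hv⟩, ⟨j, hj⟩) := by
        apply Prod.ext
        · exact Subtype.ext e1
        · exact Fin.ext e2
      rw [harg, hf']
    · have ha := hadj' (⟨v, (hmem v).mpr hv⟩, ⟨j, hj⟩)
      rcases ha with ⟨h1, h2⟩ | ⟨h1, h2⟩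
      · left
        constructor
        · rw [e1, ← h1]
        · rw [e2]; exact h2
      · right
        constructor
        · have : T.Adj v ((f' (⟨v, (hmem v).mpr hv⟩, ⟨j, hj⟩)).1 : V) := h1
          rw [e1]; exact this
        · rw [e2, ← h2]
  -- the extended function, data level
  set G1 : V → ℕ → V := fun v j =>
    if v ≠ x ∧ v ≠ y then
      (if j < m then φv v j
       else if ∃ i, 1 ≤ i ∧ i ≤ L - 1 ∧ p.getVert i = v then
         p.getVert (if Even (idx v) ↔ j = m + 1 then idx v + 1 else idx v - 1)
       else v)
    else (if j = m + 1 then p.getVert (if v = x then 1 else L - 1) else v) with hG1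
  set G2 : V → ℕ → ℕ := fun v j =>
    if v ≠ x ∧ v ≠ y then
      (if j < m then φj v j
       else if ∃ i, 1 ≤ i ∧ i ≤ L - 1 ∧ p.getVert i = v then j
       else (if j = m then m + 1 else m))
    else (if j = m + 1 then j else (if Even j then j + 1 else j - 1)) with hG2
  -- evaluation lemmas
  have eG1lo : ∀ v j, (v ≠ x ∧ v ≠ y) → j < m → G1 v j = φv v j := by
    intro v j hv hj
    rw [hG1]; simp only [if_pos hv, if_pos hj]
  have eG2lo : ∀ v j, (v ≠ x ∧ v ≠ y) → j < m → G2 v j = φj v j := by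
    intro v j hv hj
    rw [hG2]; simp only [if_pos hv, if_pos hj]
  have eG1int : ∀ v j, (v ≠ x ∧ v ≠ y) → ¬ j < m →
      (∃ i, 1 ≤ i ∧ i ≤ L - 1 ∧ p.getVert i = v) →
      G1 v j = p.getVert (if Even (idx v) ↔ j = m + 1 then idx v + 1 else idx v - 1) := by
    intro v j hv hj hI
    rw [hG1]; simp only [if_pos hv, if_neg hj, if_pos hI]
  have eG2int : ∀ v j, (v ≠ x ∧ v ≠ y) → ¬ j < m →
      (∃ i, 1 ≤ i ∧ i ≤ L - 1 ∧ p.getVert i = v) → G2 v j = j := by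
    intro v j hv hj hI
    rw [hG2]; simp only [if_pos hv, if_neg hj, if_pos hI]
  have eG1ni : ∀ v j, (v ≠ x ∧ v ≠ y) → ¬ j < m →
      ¬ (∃ i, 1 ≤ i ∧ i ≤ L - 1 ∧ p.getVert i = v) → G1 v j = v := by
    intro v j hv hj hI
    rw [hG1]; simp only [if_pos hv, if_neg hj, if_neg hI]
  have eG2ni : ∀ v j, (v ≠ x ∧ v ≠ y) → ¬ j < m →
      ¬ (∃ i, 1 ≤ i ∧ i ≤ L - 1 ∧ p.getVert i = v) →
      G2 v j = (if j = m then m + 1 else m) := by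
    intro v j hv hj hI
    rw [hG2]; simp only [if_pos hv, if_neg hj, if_neg hI]
  have eG1xy : ∀ v j, ¬ (v ≠ x ∧ v ≠ y) → j = m + 1 →
      G1 v j = p.getVert (if v = x then 1 else L - 1) := by
    intro v j hv hj
    rw [hG1]; simp only [if_neg hv, if_pos hj]
  have eG2xy : ∀ v j, ¬ (v ≠ x ∧ v ≠ y) → j = m + 1 → G2 v j = j := by
    intro v j hv hj
    rw [hG2]; simp only [if_neg hv, if_pos hj]
  have eG1v : ∀ v j, ¬ (v ≠ x ∧ v ≠ y) → ¬ j = m + 1 → G1 v j = v := by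
    intro v j hv hj
    rw [hG1]; simp only [if_neg hv, if_neg hj]
  have eG2v : ∀ v j, ¬ (v ≠ x ∧ v ≠ y) → ¬ j = m + 1 →
      G2 v j = (if Even j then j + 1 else j - 1) := by
    intro v j hv hj
    rw [hG2]; simp only [if_neg hv, if_neg hj]
  have hm2 : m % 2 = 1 := Nat.odd_iff.mp hm
  have hL2 : (L - 1) % 2 = 0 := Nat.even_iff.mp hEL1
  have eInt : ∀ t j, 1 ≤ t → t ≤ L - 1 → ¬ j < m →
      G1 (p.getVert t) j
        = p.getVert (if Even t ↔ j = m + 1 then t + 1 else t - 1) ∧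
      G2 (p.getVert t) j = j := by
    intro t j h1 h2 hj
    have hS := hIntS t h1 h2
    have hI := Int_getVert t h1 h2
    rw [eG1int _ _ hS hj hI, eG2int _ _ hS hj hI, idx_eq t h1 h2]
    exact ⟨rfl, rfl⟩
  have main1 : ∀ v j, j < m + 2 → G1 (G1 v j) (G2 v j) = v ∧ G2 (G1 v j) (G2 v j) = j := by
    intro v j hjm2
    by_cases hv : v ≠ x ∧ v ≠ y
    · by_cases hj : j < m
      · obtain ⟨hprop, hjlt, hinv1, hinv2, -⟩ := φspec v j hv hj
        rw [eG1lo v j hv hj, eG2lo v j hv hj, eG1lo _ _ hprop hjlt, eG2lo _ _ hprop hjlt]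
        exact ⟨hinv1, hinv2⟩
      · by_cases hI : ∃ i, 1 ≤ i ∧ i ≤ L - 1 ∧ p.getVert i = v
        · obtain ⟨hi1, hi2, hi3⟩ := idx_spec v hI
          rw [eG1int v j hv hj hI, eG2int v j hv hj hI]
          by_cases hcond : Even (idx v) ↔ j = m + 1
          · rw [if_pos hcond]
            by_cases htop : idx v + 1 ≤ L - 1
            · obtain ⟨g1, g2⟩ := eInt (idx v + 1) j (by omega) htop hj
              rw [g1, g2]
              have hc2 : ¬ (Even (idx v + 1) ↔ j = m + 1) := by
                rw [Nat.even_add_one]; tauto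
              rw [if_neg hc2]
              simp only [Nat.add_sub_cancel]
              exact ⟨hi3, by simp⟩
            · have hiL : idx v = L - 1 := by omega
              have hevi : Even (idx v) := by rw [hiL]; exact hEL1
              have hjm : j = m + 1 := hcond.mp hevi
              have hwy : p.getVert (idx v + 1) = y := by
                rw [hiL, show L - 1 + 1 = L from by omega, wL]
              have hyS : ¬ (y ≠ x ∧ y ≠ y) := by simp
              rw [hwy, eG1xy y j hyS hjm, eG2xy y j hyS hjm,
                if_neg (fun h => hxy h.symm), ← hiL, hi3]
              exact ⟨rfl, rfl⟩
          · rw [if_neg hcond]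
            have hjcase : j = m ∨ j = m + 1 := by omega
            by_cases hbot : 1 ≤ idx v - 1
            · obtain ⟨g1, g2⟩ := eInt (idx v - 1) j hbot (by omega) hj
              rw [g1, g2]
              have hc2 : Even (idx v - 1) ↔ j = m + 1 := by
                have h' : Even (idx v - 1) ↔ ¬ Even (idx v) := by
                  rw [Nat.even_sub hi1]
                  simp
                rw [h']
                tauto
              rw [if_pos hc2, show idx v - 1 + 1 = idx v from by omega, hi3]
              exact ⟨rfl, rfl⟩
            · have hione : idx v = 1 := by omega
              have hjm : j = m + 1 := by
                rcases hjcase with h | h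
                · exfalso
                  apply hcond
                  constructor
                  · intro he; rw [hione] at he; exact absurd he (by decide)
                  · intro hj'; omega
                · exact h
              have hw0 : p.getVert (idx v - 1) = x := by
                rw [hione]; simpa using w0
              have hxS : ¬ (x ≠ x ∧ x ≠ y) := by simp
              rw [hw0, eG1xy x j hxS hjm, eG2xy x j hxS hjm, if_pos rfl,
                show (1:ℕ) = idx v from hione.symm, hi3]
              exact ⟨rfl, rfl⟩
        · rw [eG1ni v j hv hj hI, eG2ni v j hv hj hI]
          by_cases hjm : j = m
          · rw [if_pos hjm]
            rw [eG1ni v (m+1) hv (by omega) hI, eG2ni v (m+1) hv (by omega) hI,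
              if_neg (by omega)]
            exact ⟨rfl, hjm.symm⟩
          · have hjm1 : j = m + 1 := by omega
            rw [if_neg hjm]
            rw [eG1ni v m hv (by omega) hI, eG2ni v m hv (by omega) hI, if_pos rfl]
            exact ⟨rfl, hjm1.symm⟩
    · by_cases hj : j = m + 1
      · rw [eG1xy v j hv hj, eG2xy v j hv hj]
        by_cases hvx : v = x
        · rw [if_pos hvx]
          by_cases hLb : 1 ≤ L - 1
          · obtain ⟨g1, g2⟩ := eInt 1 j le_rfl hLb (by omega)
            rw [g1, g2]
            have hc : ¬ (Even 1 ↔ j = m + 1) := by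
              intro hiff
              exact (by decide : ¬ Even 1) (hiff.mpr hj)
            rw [if_neg hc]
            exact ⟨by rw [show (1:ℕ) - 1 = 0 from rfl, w0, hvx], rfl⟩
          · have hLone : L = 1 := by omega
            have hy1 : p.getVert 1 = y := by rw [← hLone]; exact wL
            have hyS : ¬ (y ≠ x ∧ y ≠ y) := by simp
            rw [hy1, eG1xy y j hyS hj, eG2xy y j hyS hj, if_neg (fun h => hxy h.symm),
              show L - 1 = 0 from by omega, w0, hvx]
            exact ⟨rfl, rfl⟩
        · have hvy : v = y := by
            by_contra hvy
            exact hv ⟨hvx, hvy⟩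
          rw [if_neg hvx]
          by_cases hLb : 1 ≤ L - 1
          · obtain ⟨g1, g2⟩ := eInt (L - 1) j hLb le_rfl (by omega)
            rw [g1, g2]
            have hc : Even (L - 1) ↔ j = m + 1 := by
              constructor
              · intro _; exact hj
              · intro _; exact hEL1
            rw [if_pos hc, show L - 1 + 1 = L from by omega, wL, hvy]
            exact ⟨rfl, rfl⟩
          · have hLone : L = 1 := by omega
            have hxS : ¬ (x ≠ x ∧ x ≠ y) := by simp
            rw [show L - 1 = 0 from by omega, w0, eG1xy x j hxS hj, eG2xy x j hxS hj,
              if_pos rfl, show (1:ℕ) = L from hLone.symm, wL, hvy]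
            exact ⟨rfl, rfl⟩
      · rw [eG1v v j hv hj, eG2v v j hv hj]
        by_cases hev : Even j
        · have hj0 : j % 2 = 0 := Nat.even_iff.mp hev
          rw [if_pos hev]
          have hjm : ¬ j + 1 = m + 1 := by omega
          rw [eG1v v (j+1) hv hjm, eG2v v (j+1) hv hjm,
            if_neg (by rw [Nat.even_add_one]; exact fun h => h hev)]
          exact ⟨rfl, by omega⟩
        · have hj1 : j % 2 = 1 := Nat.odd_iff.mp (Nat.not_even_iff_odd.mp hev)
          rw [if_neg hev]
          have hjm : ¬ j - 1 = m + 1 := by omega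
          rw [eG1v v (j-1) hv hjm, eG2v v (j-1) hv hjm,
            if_pos (Nat.even_iff.mpr (by omega))]
          exact ⟨rfl, by omega⟩
  have main2 : ∀ v j, j < m + 2 →
      (G1 v j = v ∧ (j + 1 = G2 v j ∨ G2 v j + 1 = j)) ∨
        (T.Adj v (G1 v j) ∧ G2 v j = j) := by
    intro v j hjm2
    by_cases hv : v ≠ x ∧ v ≠ y
    · by_cases hj : j < m
      · obtain ⟨-, -, -, -, hadjd⟩ := φspec v j hv hj
        rw [eG1lo v j hv hj, eG2lo v j hv hj]
        exact hadjd
      · by_cases hI : ∃ i, 1 ≤ i ∧ i ≤ L - 1 ∧ p.getVert i = v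
        · right
          obtain ⟨hi1, hi2, hi3⟩ := idx_spec v hI
          rw [eG1int v j hv hj hI, eG2int v j hv hj hI]
          refine ⟨?_, rfl⟩
          by_cases hcond : Even (idx v) ↔ j = m + 1
          · rw [if_pos hcond]
            have := hadjT (idx v) (by omega)
            rw [hi3] at this
            exact this
          · rw [if_neg hcond]
            have := hadjT (idx v - 1) (by omega)
            rw [show idx v - 1 + 1 = idx v from by omega, hi3] at this
            exact this.symm
        · left
          rw [eG1ni v j hv hj hI, eG2ni v j hv hj hI]
          refine ⟨rfl, ?_⟩
          by_cases hjm : j = m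
          · rw [if_pos hjm]; left; omega
          · rw [if_neg hjm]; right; omega
    · by_cases hj : j = m + 1
      · right
        rw [eG1xy v j hv hj, eG2xy v j hv hj]
        refine ⟨?_, rfl⟩
        by_cases hvx : v = x
        · rw [if_pos hvx, hvx]
          have h0 := hadjT 0 (by omega)
          rw [w0] at h0
          exact h0
        · have hvy : v = y := by
            by_contra hvy
            exact hv ⟨hvx, hvy⟩
          rw [if_neg hvx, hvy]
          have h1 := hadjT (L-1) (by omega)
          rw [show L - 1 + 1 = L from by omega, wL] at h1
          exact h1.symm
      · left
        rw [eG1v v j hv hj, eG2v v j hv hj]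
        refine ⟨rfl, ?_⟩
        by_cases hev : Even j
        · rw [if_pos hev]; left; rfl
        · have hj1 : j % 2 = 1 := Nat.odd_iff.mp (Nat.not_even_iff_odd.mp hev)
          rw [if_neg hev]; right; omega
  have hG2lt : ∀ v (j : Fin (m + 2)), G2 v (j : ℕ) < m + 2 := by
    intro v j
    have hjm2 : (j : ℕ) < m + 2 := j.isLt
    by_cases hv : v ≠ x ∧ v ≠ y
    · by_cases hj : (j : ℕ) < m
      · rw [eG2lo v _ hv hj]
        have := (φspec v _ hv hj).2.1
        omega
      · by_cases hI : ∃ i, 1 ≤ i ∧ i ≤ L - 1 ∧ p.getVert i = v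
        · rw [eG2int v _ hv hj hI]; omega
        · rw [eG2ni v _ hv hj hI]
          split <;> omega
    · by_cases hj : (j : ℕ) = m + 1
      · rw [eG2xy v _ hv hj]; omega
      · rw [eG2v v _ hv hj]
        split <;> omega
  refine ⟨fun q => (G1 q.1 (q.2 : ℕ), ⟨G2 q.1 (q.2 : ℕ), hG2lt q.1 q.2⟩), ?_, ?_⟩
  · intro q
    have h := main1 q.1 (q.2 : ℕ) q.2.isLt
    apply Prod.ext
    · exact h.1
    · apply Fin.ext
      exact h.2
  · intro q
    have h := main2 q.1 (q.2 : ℕ) q.2.isLt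
    rcases h with ⟨h1, h2⟩ | ⟨h1, h2⟩
    · exact Or.inl ⟨h1.symm, h2⟩
    · exact Or.inr ⟨h1, Fin.ext h2.symm⟩

lemma key_lemma : ∀ (n : ℕ), 1 ≤ n → ∀ {V : Type u} [Fintype V] [DecidableEq V]
    (G : SimpleGraph V), G.Connected → ∀ (c : V → Bool),
    (∀ v w, G.Adj v w → c v ≠ c w) →
    (Finset.univ.filter fun v => c v = true).card = n →
    (Finset.univ.filter fun v => c v = false).card = n →
    ∃ f : V × Fin (2 * n - 1) → V × Fin (2 * n - 1),
      Function.Involutive f ∧ ∀ q, (prism G (2 * n - 1)).Adj q (f q) := by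
  intro n hn
  induction n, hn using Nat.le_induction with
  | base =>
    intro V _ _ G hconn c hproper hw hb
    classical
    obtain ⟨x, hx⟩ := Finset.card_eq_one.mp hw
    obtain ⟨y, hy⟩ := Finset.card_eq_one.mp hb
    have hcx : c x = true := by
      have : x ∈ Finset.univ.filter fun v => c v = true := hx ▸ Finset.mem_singleton_self x
      simpa using this
    have hcy : c y = false := by
      have : y ∈ Finset.univ.filter fun v => c v = false := hy ▸ Finset.mem_singleton_self y
      simpa using this
    have hall : ∀ v : V, v = x ∨ v = y := by
      intro v
      cases hcv : c v with
      | true =>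
        left
        have : v ∈ Finset.univ.filter fun v => c v = true := by simp [hcv]
        rw [hx] at this
        simpa using this
      | false =>
        right
        have : v ∈ Finset.univ.filter fun v => c v = false := by simp [hcv]
        rw [hy] at this
        simpa using this
    have hxy : x ≠ y := by
      intro h
      rw [h, hcy] at hcx
      cases hcx
    obtain ⟨pw⟩ := hconn.preconnected x y
    have hadjxy : G.Adj x y := by
      have hnn : ¬ pw.Nil := SimpleGraph.Walk.not_nil_of_ne hxy
      have h1 : G.Adj x (pw.getVert 1) := pw.adj_snd hnn
      rcases hall (pw.getVert 1) with h | h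
      · exact absurd (h ▸ h1) (G.irrefl)
      · exact h ▸ h1
    refine ⟨fun q => (if q.1 = x then y else x, q.2), ?_, ?_⟩
    · rintro ⟨v, j⟩
      rcases hall v with rfl | rfl
      · simp [hxy, Ne.symm hxy]
      · simp [hxy, Ne.symm hxy]
    · rintro ⟨v, j⟩
      rcases hall v with rfl | rfl
      · simp only [if_pos rfl]
        exact Or.inr ⟨hadjxy, rfl⟩
      · simp only [if_neg (Ne.symm hxy)]
        exact Or.inr ⟨hadjxy.symm, rfl⟩
  | succ n hn IH =>
    intro V _ _ G hconn c hproper hw hb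
    classical
    rw [show 2 * (n + 1) - 1 = (2 * n - 1) + 2 from by omega]
    obtain ⟨T, hTle, hTconn, hTacyc⟩ :=
      exists_spanning_tree_aux (G.edgeSet.ncard) G le_rfl hconn
    have htree : T.IsTree := ⟨hTconn, hTacyc⟩
    have hproperT : ∀ v w, T.Adj v w → c v ≠ c w := fun v w h => hproper v w (hTle h)
    obtain ⟨x, hcx, hdx⟩ := exists_leaf htree c hproperT true (n + 1) hw
      (by simpa using hb) (by omega)
    obtain ⟨y, hcy, hdy⟩ := exists_leaf htree c hproperT false (n + 1)
      (by simpa using hb) (by simpa using hw) (by omega)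
    have hxy : x ≠ y := by
      intro h
      rw [h, hcy] at hcx
      cases hcx
    obtain ⟨pw⟩ := hTconn.preconnected x y
    set p : T.Path x y := pw.toPath with hpdef
    have hodd : Odd p.1.length :=
      walk_odd_length c hproperT p.1 (by rw [hcx, hcy]; simp)
    set s : Set V := {v | v ≠ x ∧ v ≠ y} with hs
    have hmem : ∀ v, v ∈ s ↔ (v ≠ x ∧ v ≠ y) := fun v => Iff.rfl
    have hxmem : x ∈ Finset.univ.filter fun v => c v = true := by simp [hcx]
    have hymem : y ∈ Finset.univ.filter fun v => c v = false := by simp [hcy]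
    -- connectivity of the induced graph
    have havoid : ∀ (a b : V) (ha : a ∈ s) (hb : b ∈ s), (T.induce s).Reachable
        ⟨a, ha⟩ ⟨b, hb⟩ := by
      intro a b ha hb
      obtain ⟨qw⟩ := hTconn.preconnected a b
      set q : T.Path a b := qw.toPath with hqdef
      have hsupp : ∀ z ∈ q.1.support, z ∈ s := by
        intro z hz
        rw [hmem]
        constructor
        · intro h
          subst h
          have h2d : 2 ≤ T.degree z :=
            interior_two_le_degree q.1 q.2 hz (Ne.symm ((hmem a).mp ha).1)
              (Ne.symm ((hmem b).mp hb).1)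
          omega
        · intro h
          subst h
          have h2d : 2 ≤ T.degree z :=
            interior_two_le_degree q.1 q.2 hz (Ne.symm ((hmem a).mp ha).2)
              (Ne.symm ((hmem b).mp hb).2)
          omega
      exact reachable_induce q.1 hsupp ha hb
    have hsne : Nonempty ↥s := by
      have h2 : 2 ≤ (Finset.univ.filter fun v => c v = true).card := by omega
      have : 1 ≤ ((Finset.univ.filter fun v => c v = true).erase x).card := by
        rw [Finset.card_erase_of_mem hxmem]
        omega
      have hpos : 0 < ((Finset.univ.filter fun v : V => c v = true).erase x).card := by omega
      obtain ⟨v, hv⟩ := Finset.card_pos.mp hpos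
      rw [Finset.mem_erase, Finset.mem_filter] at hv
      refine ⟨⟨v, ?_, ?_⟩⟩
      · exact hv.1
      · intro h
        rw [h, hcy] at hv
        simp at hv
    have hG'conn : (T.induce s).Connected := by
      rw [SimpleGraph.connected_iff]
      refine ⟨?_, hsne⟩
      rintro ⟨a, ha⟩ ⟨b, hb⟩
      exact havoid a b ha hb
    have hproper' : ∀ v w : ↥s, (T.induce s).Adj v w → c v.1 ≠ c w.1 := by
      rintro ⟨v, hv⟩ ⟨w, hw2⟩ hadj
      exact hproperT v w hadj
    -- cardinalities
    have hwcard : (Finset.univ.filter fun v : ↥s => c v.1 = true).card = n := by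
      have := Finset.card_bij (s := Finset.univ.filter fun v : ↥s => c v.1 = true)
        (t := (Finset.univ.filter fun v : V => c v = true).erase x)
        (i := fun v _ => v.1)
        (by
          intro a ha
          rw [Finset.mem_filter] at ha
          rw [Finset.mem_erase, Finset.mem_filter]
          exact ⟨a.2.1, Finset.mem_univ _, ha.2⟩)
        (by
          intro a _ b _ h
          exact Subtype.ext h)
        (by
          intro b hb
          rw [Finset.mem_erase, Finset.mem_filter] at hb
          have hbs : b ∈ s := by
            refine ⟨hb.1, ?_⟩
            intro h
            rw [h, hcy] at hb
            simp at hb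
          exact ⟨⟨b, hbs⟩, by simp [hb.2.2], rfl⟩)
      rw [this, Finset.card_erase_of_mem hxmem, hw]
      omega
    have hbcard : (Finset.univ.filter fun v : ↥s => c v.1 = false).card = n := by
      have := Finset.card_bij (s := Finset.univ.filter fun v : ↥s => c v.1 = false)
        (t := (Finset.univ.filter fun v : V => c v = false).erase y)
        (i := fun v _ => v.1)
        (by
          intro a ha
          rw [Finset.mem_filter] at ha
          rw [Finset.mem_erase, Finset.mem_filter]
          exact ⟨a.2.2, Finset.mem_univ _, ha.2⟩)
        (by
          intro a _ b _ h
          exact Subtype.ext h)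
        (by
          intro b hb
          rw [Finset.mem_erase, Finset.mem_filter] at hb
          have hbs : b ∈ s := by
            refine ⟨?_, hb.1⟩
            intro h
            rw [h, hcx] at hb
            simp at hb
          exact ⟨⟨b, hbs⟩, by simp [hb.2.2], rfl⟩)
      rw [this, Finset.card_erase_of_mem hymem, hb]
      omega
    obtain ⟨f', hf', hadj'⟩ := IH (T.induce s) hG'conn (fun v => c v.1)
      hproper' hwcard hbcard
    obtain ⟨f, hf, hadjf⟩ := extend_involution T x y p.1 p.2 hodd (2 * n - 1)
      ⟨n - 1, by omega⟩ s hmem f' hf' hadj'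
    refine ⟨f, hf, ?_⟩
    intro q
    rcases hadjf q with ⟨h1, h2⟩ | ⟨h1, h2⟩
    · exact Or.inl ⟨h1, h2⟩
    · exact Or.inr ⟨hTle h1, h2⟩

/-- If `G` is a finite connected bipartite graph with `n` black and `n` white
vertices (`n ≥ 1`), then the prism `G × I_{2n-1}` admits a perfect matching.
Here `c v = true` means white, `c v = false` means black, and `c` is a proper 2-coloring. -/
theorem prism_has_perfect_matching
    {V : Type*} [Fintype V] [DecidableEq V]
    (G : SimpleGraph V) (hconn : G.Connected)
    (c : V → Bool) (hproper : ∀ v w, G.Adj v w → c v ≠ c w)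
    (n : ℕ) (hn : 1 ≤ n)
    (hwhite : (Finset.univ.filter fun v => c v = true).card = n)
    (hblack : (Finset.univ.filter fun v => c v = false).card = n) :
    ∃ M : (prism G (2 * n - 1)).Subgraph, M.IsPerfectMatching := by
  obtain ⟨f, hf, hadj⟩ := key_lemma n hn G hconn c hproper hwhite hblack
  exact matching_of_involution _ f hf hadj
end

section
/- For any tiling t of a region R by dominoes and any unit coordinate vector u, the u-pretwist equals the (−u)-pretwist: T^{−u}(t) = T^{u}(t). -/
open scoped Classical

noncomputable section

/-- The closed unit (basic) cube with minimal corner `x ∈ ℤ³`. -/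
def cube (x : Fin 3 → ℤ) : Set (Fin 3 → ℝ) :=
  {p | ∀ i, (x i : ℝ) ≤ p i ∧ p i ≤ (x i : ℝ) + 1}

/-- A domino is encoded as an ordered pair of cells (minimal corners):
first the white cell, then the black cell.  Its underlying point set: -/
def dominoSet (d : (Fin 3 → ℤ) × (Fin 3 → ℤ)) : Set (Fin 3 → ℝ) :=
  cube d.1 ∪ cube d.2

/-- `v(d)`: the vector from the center of the white cube of `d` to the center of
its black cube. -/
def vvec (d : (Fin 3 → ℤ) × (Fin 3 → ℤ)) : Fin 3 → ℝ :=
  fun i => (d.2 i : ℝ) - (d.1 i : ℝ)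

/-- The open `u`-shade of a set `X`: the interior of `(X + [0,∞)·u) \ X`. -/
def shade (u : Fin 3 → ℝ) (X : Set (Fin 3 → ℝ)) : Set (Fin 3 → ℝ) :=
  interior ({p | ∃ x ∈ X, ∃ s : ℝ, 0 ≤ s ∧ p = x + s • u} \ X)

/-- The effect `τ^u(d0,d1)`: `(1/4)·det(v(d1), v(d0), u)` if `d1` meets the open
`u`-shade of `d0`, and `0` otherwise. -/
def effect (u : Fin 3 → ℝ) (d0 d1 : (Fin 3 → ℤ) × (Fin 3 → ℤ)) : ℝ :=
  if (dominoSet d1 ∩ shade u (dominoSet d0)).Nonempty then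
    (1 / 4) * (Matrix.of ![vvec d1, vvec d0, u]).det
  else 0

/-- The `u`-pretwist `T^u(t) = Σ_{d0,d1 ∈ t} τ^u(d0,d1)`. -/
def pretwist (u : Fin 3 → ℝ) (t : Finset ((Fin 3 → ℤ) × (Fin 3 → ℤ))) : ℝ :=
  ∑ d0 ∈ t, ∑ d1 ∈ t, effect u d0 d1

/-- `d` is a domino: its two cells are face-adjacent, the first cell being white
(even coordinate sum) and hence the second black. -/
def IsDomino (d : (Fin 3 → ℤ) × (Fin 3 → ℤ)) : Prop :=
  (∑ i, |d.1 i - d.2 i|) = 1 ∧ Even (∑ i, d.1 i)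

/-- `t` is a tiling of the region `R` (a finite set of cells) by dominoes. -/
def IsTiling (R : Finset (Fin 3 → ℤ)) (t : Finset ((Fin 3 → ℤ) × (Fin 3 → ℤ))) : Prop :=
  (∀ d ∈ t, IsDomino d ∧ d.1 ∈ R ∧ d.2 ∈ R) ∧
  (∀ x ∈ R, ∃! d, d ∈ t ∧ (x = d.1 ∨ x = d.2))

def boxLo (d : (Fin 3 → ℤ) × (Fin 3 → ℤ)) (j : Fin 3) : ℤ := min (d.1 j) (d.2 j)

def boxHi (d : (Fin 3 → ℤ) × (Fin 3 → ℤ)) (j : Fin 3) : ℤ := max (d.1 j) (d.2 j) + 1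

lemma boxLo_lt_boxHi (d : (Fin 3 → ℤ) × (Fin 3 → ℤ)) (j : Fin 3) : boxLo d j < boxHi d j :=
  lt_of_le_of_lt min_le_max (lt_add_one _)

lemma domino_structure {d : (Fin 3 → ℤ) × (Fin 3 → ℤ)} (hd : IsDomino d) :
    ∃ k : Fin 3, (∀ j, j ≠ k → d.1 j = d.2 j) ∧ (d.2 k = d.1 k + 1 ∨ d.2 k = d.1 k - 1) := by
  obtain ⟨h1, -⟩ := hd
  rw [Fin.sum_univ_three] at h1
  have h0 := abs_nonneg (d.1 0 - d.2 0)
  have h1' := abs_nonneg (d.1 1 - d.2 1)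
  have h2 := abs_nonneg (d.1 2 - d.2 2)
  have key : (|d.1 0 - d.2 0| = 1 ∧ |d.1 1 - d.2 1| = 0 ∧ |d.1 2 - d.2 2| = 0)
      ∨ (|d.1 0 - d.2 0| = 0 ∧ |d.1 1 - d.2 1| = 1 ∧ |d.1 2 - d.2 2| = 0)
      ∨ (|d.1 0 - d.2 0| = 0 ∧ |d.1 1 - d.2 1| = 0 ∧ |d.1 2 - d.2 2| = 1) := by omega
  rcases key with ⟨ha, hb, hc⟩ | ⟨ha, hb, hc⟩ | ⟨ha, hb, hc⟩
  · refine ⟨0, ?_, ?_⟩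
    · intro j hj
      fin_cases j
      · exact absurd rfl hj
      · rw [abs_eq_zero, sub_eq_zero] at hb; exact hb
      · rw [abs_eq_zero, sub_eq_zero] at hc; exact hc
    · rw [abs_eq (by norm_num : (0:ℤ) ≤ 1)] at ha; omega
  · refine ⟨1, ?_, ?_⟩
    · intro j hj
      fin_cases j
      · rw [abs_eq_zero, sub_eq_zero] at ha; exact ha
      · exact absurd rfl hj
      · rw [abs_eq_zero, sub_eq_zero] at hc; exact hc
    · rw [abs_eq (by norm_num : (0:ℤ) ≤ 1)] at hb; omega
  · refine ⟨2, ?_, ?_⟩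
    · intro j hj
      fin_cases j
      · rw [abs_eq_zero, sub_eq_zero] at ha; exact ha
      · rw [abs_eq_zero, sub_eq_zero] at hb; exact hb
      · exact absurd rfl hj
    · rw [abs_eq (by norm_num : (0:ℤ) ≤ 1)] at hc; omega

lemma cube_union_eq {x y : Fin 3 → ℤ} (k : Fin 3) (hk : ∀ j, j ≠ k → x j = y j)
    (hky : y k = x k + 1) :
    cube x ∪ cube y =
      Set.pi Set.univ (fun j => Set.Icc ((min (x j) (y j) : ℤ) : ℝ) ((max (x j) (y j) + 1 : ℤ) : ℝ)) := by
  have hxy : ∀ j, x j ≤ y j := by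
    intro j; by_cases hj : j = k
    · subst hj; omega
    · rw [hk j hj]
  have hmin : ∀ j, min (x j) (y j) = x j := fun j => min_eq_left (hxy j)
  have hmax : ∀ j, max (x j) (y j) = y j := fun j => max_eq_right (hxy j)
  simp only [hmin, hmax]
  ext p
  simp only [cube, Set.mem_union, Set.mem_setOf_eq, Set.mem_pi, Set.mem_univ, Set.mem_Icc,
    true_implies]
  have hxyR : ∀ j, (x j : ℝ) ≤ (y j : ℝ) := fun j => by exact_mod_cast hxy j
  push_cast
  constructor
  · rintro (h | h) j
    · obtain ⟨h1, h2⟩ := h j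
      exact ⟨h1, by linarith [hxyR j]⟩
    · obtain ⟨h1, h2⟩ := h j
      exact ⟨le_trans (hxyR j) h1, h2⟩
  · intro h
    by_cases hc : p k ≤ (x k : ℝ) + 1
    · left
      intro j
      by_cases hj : j = k
      · subst hj; exact ⟨(h j).1, hc⟩
      · have hxj : (x j : ℝ) = (y j : ℝ) := by exact_mod_cast hk j hj
        exact ⟨(h j).1, by rw [hxj]; exact (h j).2⟩
    · right
      have hkR : (y k : ℝ) = (x k : ℝ) + 1 := by exact_mod_cast hky
      intro j
      by_cases hj : j = k
      · subst hj; exact ⟨by rw [hkR]; linarith, (h j).2⟩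
      · have hxj : (x j : ℝ) = (y j : ℝ) := by exact_mod_cast hk j hj
        exact ⟨by rw [← hxj]; exact (h j).1, (h j).2⟩

lemma dominoSet_eq_box {d : (Fin 3 → ℤ) × (Fin 3 → ℤ)} (hd : IsDomino d) :
    dominoSet d = Set.pi Set.univ (fun j => Set.Icc ((boxLo d j : ℤ) : ℝ) ((boxHi d j : ℤ) : ℝ)) := by
  obtain ⟨k, hk, hkk⟩ := domino_structure hd
  rcases hkk with h | h
  · exact cube_union_eq k hk h
  · have := cube_union_eq (x := d.2) (y := d.1) k (fun j hj => (hk j hj).symm) (by omega)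
    rw [dominoSet, Set.union_comm]
    rw [this]
    simp only [boxLo, boxHi, min_comm (d.2 _) (d.1 _), max_comm (d.2 _) (d.1 _)]

lemma domino_cells {d : (Fin 3 → ℤ) × (Fin 3 → ℤ)} (hd : IsDomino d) (x : Fin 3 → ℤ)
    (hx : ∀ j, boxLo d j ≤ x j ∧ x j < boxHi d j) : x = d.1 ∨ x = d.2 := by
  obtain ⟨k, hk, hkk⟩ := domino_structure hd
  have hjk : ∀ j, j ≠ k → x j = d.1 j ∧ x j = d.2 j := by
    intro j hj
    have := hx j
    have heq := hk j hj
    simp only [boxLo, boxHi] at this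
    omega
  have hkx : x k = d.1 k ∨ x k = d.2 k := by
    have := hx k
    simp only [boxLo, boxHi] at this
    omega
  rcases hkx with h | h
  · left; funext j; by_cases hj : j = k
    · subst hj; exact h
    · exact (hjk j hj).1
  · right; funext j; by_cases hj : j = k
    · subst hj; exact h
    · exact (hjk j hj).2

lemma shade_box_pos (a b : Fin 3 → ℝ) (hab : ∀ j, a j < b j) (i : Fin 3) :
    shade (Pi.single i 1) (Set.pi Set.univ fun j => Set.Icc (a j) (b j)) =
      Set.pi Set.univ (fun j => if j = i then Set.Ioi (b i) else Set.Ioo (a j) (b j)) := by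
  set B := Set.pi Set.univ fun j => Set.Icc (a j) (b j) with hB
  have hstep : ({p : Fin 3 → ℝ | ∃ x ∈ B, ∃ s : ℝ, 0 ≤ s ∧ p = x + s • (Pi.single i 1 : Fin 3 → ℝ)} \ B)
      = Set.pi Set.univ (fun j => if j = i then Set.Ioi (b i) else Set.Icc (a j) (b j)) := by
    ext p
    constructor
    · rintro ⟨⟨x, hx, s, hs, rfl⟩, hpB⟩
      have hx' : ∀ j, a j ≤ x j ∧ x j ≤ b j := by
        intro j; simpa using hx j (Set.mem_univ j)
      have hco : ∀ j, (x + s • (Pi.single i 1 : Fin 3 → ℝ)) j = if j = i then x j + s else x j := by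
        intro j
        by_cases hj : j = i <;> simp [hj, Pi.single_apply]
      have hBi : b i < (x + s • (Pi.single i 1 : Fin 3 → ℝ)) i := by
        by_contra hle
        push_neg at hle
        apply hpB
        intro j _
        simp only [Set.mem_Icc]
        by_cases hj : j = i
        · subst hj
          refine ⟨?_, hle⟩
          rw [hco, if_pos rfl]
          linarith [(hx' j).1]
        · rw [hco, if_neg hj]; exact hx' j
      intro j _
      by_cases hj : j = i
      · subst hj; simpa using hBi
      · simp only [hco, if_neg hj, Set.mem_Icc]
        exact hx' j
    · intro hp
      have hp' : ∀ j, p j ∈ (if j = i then Set.Ioi (b i) else Set.Icc (a j) (b j)) := by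
        intro j; simpa using hp j (Set.mem_univ j)
      have hpi : b i < p i := by have := hp' i; simpa using this
      refine ⟨⟨Function.update p i (b i), ?_, p i - b i, by linarith, ?_⟩, ?_⟩
      · intro j _
        simp only [Set.mem_Icc]
        by_cases hj : j = i
        · subst hj; rw [Function.update_self]; exact ⟨le_of_lt (hab j), le_refl _⟩
        · rw [Function.update_of_ne hj]
          have := hp' j; rw [if_neg hj] at this; simpa using this
      · funext j
        by_cases hj : j = i
        · subst hj
          simp [Function.update_self, Pi.single_apply]
        · simp [Function.update_of_ne hj, Pi.single_apply, hj]
      · intro hpB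
        have := hpB i (Set.mem_univ i)
        simp only [Set.mem_Icc] at this
        linarith
  rw [shade, hstep, interior_pi_set Set.finite_univ]
  refine Set.pi_congr rfl fun j _ => ?_
  by_cases hj : j = i
  · simp [hj, isOpen_Ioi.interior_eq]
  · simp [hj, interior_Icc]

lemma shade_box_neg (a b : Fin 3 → ℝ) (hab : ∀ j, a j < b j) (i : Fin 3) :
    shade (-(Pi.single i 1)) (Set.pi Set.univ fun j => Set.Icc (a j) (b j)) =
      Set.pi Set.univ (fun j => if j = i then Set.Iio (a i) else Set.Ioo (a j) (b j)) := by
  set B := Set.pi Set.univ fun j => Set.Icc (a j) (b j) with hB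
  have hstep : ({p : Fin 3 → ℝ | ∃ x ∈ B, ∃ s : ℝ, 0 ≤ s ∧ p = x + s • (-(Pi.single i 1) : Fin 3 → ℝ)} \ B)
      = Set.pi Set.univ (fun j => if j = i then Set.Iio (a i) else Set.Icc (a j) (b j)) := by
    ext p
    constructor
    · rintro ⟨⟨x, hx, s, hs, rfl⟩, hpB⟩
      have hx' : ∀ j, a j ≤ x j ∧ x j ≤ b j := by
        intro j; simpa using hx j (Set.mem_univ j)
      have hco : ∀ j, (x + s • (-(Pi.single i 1) : Fin 3 → ℝ)) j = if j = i then x j - s else x j := by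
        intro j
        by_cases hj : j = i <;> simp [hj, Pi.single_apply] <;> ring
      have hAi : (x + s • (-(Pi.single i 1) : Fin 3 → ℝ)) i < a i := by
        by_contra hle
        push_neg at hle
        apply hpB
        intro j _
        simp only [Set.mem_Icc]
        by_cases hj : j = i
        · subst hj
          refine ⟨hle, ?_⟩
          rw [hco, if_pos rfl]
          linarith [(hx' j).2]
        · simp only [hco, if_neg hj]; exact hx' j
      intro j _
      by_cases hj : j = i
      · subst hj; simpa using hAi
      · simp only [hco, if_neg hj, Set.mem_Icc]
        exact hx' j
    · intro hp
      have hp' : ∀ j, p j ∈ (if j = i then Set.Iio (a i) else Set.Icc (a j) (b j)) := by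
        intro j; simpa using hp j (Set.mem_univ j)
      have hpi : p i < a i := by have := hp' i; simpa using this
      refine ⟨⟨Function.update p i (a i), ?_, a i - p i, by linarith, ?_⟩, ?_⟩
      · intro j _
        simp only [Set.mem_Icc]
        by_cases hj : j = i
        · subst hj; rw [Function.update_self]; exact ⟨le_refl _, le_of_lt (hab j)⟩
        · rw [Function.update_of_ne hj]
          have := hp' j; rw [if_neg hj] at this; simpa using this
      · funext j
        by_cases hj : j = i
        · subst hj
          simp [Function.update_self, Pi.single_apply]
        · simp [Function.update_of_ne hj, Pi.single_apply, hj]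
      · intro hpB
        have := hpB i (Set.mem_univ i)
        simp only [Set.mem_Icc] at this
        linarith
  rw [shade, hstep, interior_pi_set Set.finite_univ]
  refine Set.pi_congr rfl fun j _ => ?_
  by_cases hj : j = i
  · simp [hj, isOpen_Iio.interior_eq]
  · simp [hj, interior_Icc]

lemma Icc_inter_Ioo_nonempty {a0 b0 a1 b1 : ℝ} (h0 : a0 < b0) (h1 : a1 ≤ b1) :
    (Set.Icc a1 b1 ∩ Set.Ioo a0 b0).Nonempty ↔ a0 < b1 ∧ a1 < b0 := by
  constructor
  · rintro ⟨x, ⟨hx1, hx2⟩, hx3, hx4⟩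
    exact ⟨lt_of_lt_of_le hx3 hx2, lt_of_le_of_lt hx1 hx4⟩
  · rintro ⟨h2, h3⟩
    set m := min b0 b1 with hm
    have hm1 : m ≤ b0 := min_le_left _ _
    have hm2 : m ≤ b1 := min_le_right _ _
    have hm3 : a0 < m := lt_min h0 h2
    refine ⟨max a1 ((a0 + m) / 2), ⟨le_max_left _ _, max_le h1 (by linarith)⟩,
      lt_of_lt_of_le (by linarith) (le_max_right _ _), max_lt h3 (by linarith)⟩

lemma Icc_inter_Ioi_nonempty {a1 b1 c : ℝ} (h1 : a1 ≤ b1) :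
    (Set.Icc a1 b1 ∩ Set.Ioi c).Nonempty ↔ c < b1 := by
  constructor
  · rintro ⟨x, ⟨_, hx2⟩, hx3⟩
    exact lt_of_lt_of_le hx3 hx2
  · intro h
    exact ⟨b1, ⟨h1, le_refl _⟩, h⟩

lemma Icc_inter_Iio_nonempty {a1 b1 c : ℝ} (h1 : a1 ≤ b1) :
    (Set.Icc a1 b1 ∩ Set.Iio c).Nonempty ↔ a1 < c := by
  constructor
  · rintro ⟨x, ⟨hx1, _⟩, hx3⟩
    exact lt_of_le_of_lt hx1 hx3
  · intro h
    exact ⟨a1, ⟨le_refl _, h1⟩, h⟩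

lemma key_iff {d0 d1 : (Fin 3 → ℤ) × (Fin 3 → ℤ)} (hd0 : IsDomino d0) (hd1 : IsDomino d1)
    (hdisj : ∃ j, boxHi d1 j ≤ boxLo d0 j ∨ boxHi d0 j ≤ boxLo d1 j) (i : Fin 3) :
    (dominoSet d1 ∩ shade (Pi.single i 1) (dominoSet d0)).Nonempty ↔
    (dominoSet d0 ∩ shade (-(Pi.single i 1)) (dominoSet d1)).Nonempty := by
  have hab0 : ∀ j, ((boxLo d0 j : ℤ) : ℝ) < ((boxHi d0 j : ℤ) : ℝ) := fun j => by
    exact_mod_cast boxLo_lt_boxHi d0 j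
  have hab1 : ∀ j, ((boxLo d1 j : ℤ) : ℝ) < ((boxHi d1 j : ℤ) : ℝ) := fun j => by
    exact_mod_cast boxLo_lt_boxHi d1 j
  have hdisjR : ∃ j, ((boxHi d1 j : ℤ) : ℝ) ≤ ((boxLo d0 j : ℤ) : ℝ) ∨
      ((boxHi d0 j : ℤ) : ℝ) ≤ ((boxLo d1 j : ℤ) : ℝ) := by
    obtain ⟨j, hj | hj⟩ := hdisj
    · exact ⟨j, Or.inl (by exact_mod_cast hj)⟩
    · exact ⟨j, Or.inr (by exact_mod_cast hj)⟩
  rw [dominoSet_eq_box hd0, dominoSet_eq_box hd1, shade_box_pos _ _ hab0 i,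
    shade_box_neg _ _ hab1 i, ← Set.pi_inter_distrib, ← Set.pi_inter_distrib,
    Set.univ_pi_nonempty_iff, Set.univ_pi_nonempty_iff]
  have L : (∀ j, (Set.Icc ((boxLo d1 j : ℤ) : ℝ) ((boxHi d1 j : ℤ) : ℝ) ∩
        (if j = i then Set.Ioi ((boxHi d0 i : ℤ) : ℝ) else
          Set.Ioo ((boxLo d0 j : ℤ) : ℝ) ((boxHi d0 j : ℤ) : ℝ))).Nonempty) ↔
      ((∀ j, j ≠ i → ((boxLo d0 j : ℤ) : ℝ) < ((boxHi d1 j : ℤ) : ℝ) ∧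
          ((boxLo d1 j : ℤ) : ℝ) < ((boxHi d0 j : ℤ) : ℝ)) ∧
        ((boxHi d0 i : ℤ) : ℝ) < ((boxHi d1 i : ℤ) : ℝ)) := by
    constructor
    · intro h
      refine ⟨fun j hj => ?_, ?_⟩
      · have := h j; rw [if_neg hj] at this
        exact (Icc_inter_Ioo_nonempty (hab0 j) (le_of_lt (hab1 j))).1 this
      · have := h i; rw [if_pos rfl] at this
        exact (Icc_inter_Ioi_nonempty (le_of_lt (hab1 i))).1 this
    · rintro ⟨hP, hi⟩ j
      by_cases hj : j = i
      · subst hj; rw [if_pos rfl]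
        exact (Icc_inter_Ioi_nonempty (le_of_lt (hab1 j))).2 hi
      · rw [if_neg hj]
        exact (Icc_inter_Ioo_nonempty (hab0 j) (le_of_lt (hab1 j))).2 (hP j hj)
  have R : (∀ j, (Set.Icc ((boxLo d0 j : ℤ) : ℝ) ((boxHi d0 j : ℤ) : ℝ) ∩
        (if j = i then Set.Iio ((boxLo d1 i : ℤ) : ℝ) else
          Set.Ioo ((boxLo d1 j : ℤ) : ℝ) ((boxHi d1 j : ℤ) : ℝ))).Nonempty) ↔
      ((∀ j, j ≠ i → ((boxLo d1 j : ℤ) : ℝ) < ((boxHi d0 j : ℤ) : ℝ) ∧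
          ((boxLo d0 j : ℤ) : ℝ) < ((boxHi d1 j : ℤ) : ℝ)) ∧
        ((boxLo d0 i : ℤ) : ℝ) < ((boxLo d1 i : ℤ) : ℝ)) := by
    constructor
    · intro h
      refine ⟨fun j hj => ?_, ?_⟩
      · have := h j; rw [if_neg hj] at this
        exact (Icc_inter_Ioo_nonempty (hab1 j) (le_of_lt (hab0 j))).1 this
      · have := h i; rw [if_pos rfl] at this
        exact (Icc_inter_Iio_nonempty (le_of_lt (hab0 i))).1 this
    · rintro ⟨hP, hi⟩ j
      by_cases hj : j = i
      · subst hj; rw [if_pos rfl]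
        exact (Icc_inter_Iio_nonempty (le_of_lt (hab0 j))).2 hi
      · rw [if_neg hj]
        exact (Icc_inter_Ioo_nonempty (hab1 j) (le_of_lt (hab0 j))).2 (hP j hj)
  rw [L, R]
  obtain ⟨j0, hj0⟩ := hdisjR
  constructor
  · rintro ⟨hP, hbi⟩
    refine ⟨fun j hj => ⟨(hP j hj).2, (hP j hj).1⟩, ?_⟩
    by_cases hji : j0 = i
    · subst hji
      rcases hj0 with h | h
      · exfalso; linarith [hab0 j0]
      · linarith [hab0 j0]
    · exfalso
      obtain ⟨h1, h2⟩ := hP j0 hji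
      rcases hj0 with h | h <;> linarith
  · rintro ⟨hP, hai⟩
    refine ⟨fun j hj => ⟨(hP j hj).2, (hP j hj).1⟩, ?_⟩
    by_cases hji : j0 = i
    · subst hji
      rcases hj0 with h | h
      · exfalso; linarith [hab1 j0]
      · linarith [hab1 j0]
    · exfalso
      obtain ⟨h1, h2⟩ := hP j0 hji
      rcases hj0 with h | h <;> linarith

lemma tiling_disjoint {R : Finset (Fin 3 → ℤ)} {t : Finset ((Fin 3 → ℤ) × (Fin 3 → ℤ))}
    (ht : IsTiling R t) {d0 d1 : (Fin 3 → ℤ) × (Fin 3 → ℤ)} (h0 : d0 ∈ t) (h1 : d1 ∈ t)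
    (hne : d0 ≠ d1) : ∃ j, boxHi d1 j ≤ boxLo d0 j ∨ boxHi d0 j ≤ boxLo d1 j := by
  by_contra hcon
  push_neg at hcon
  set c : Fin 3 → ℤ := fun j => max (boxLo d0 j) (boxLo d1 j) with hc
  have hx0 : ∀ j, boxLo d0 j ≤ c j ∧ c j < boxHi d0 j := by
    intro j
    have h := hcon j
    have := boxLo_lt_boxHi d0 j
    have := boxLo_lt_boxHi d1 j
    constructor
    · exact le_max_left _ _
    · exact max_lt (by omega) (by omega)
  have hx1 : ∀ j, boxLo d1 j ≤ c j ∧ c j < boxHi d1 j := by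
    intro j
    have h := hcon j
    have := boxLo_lt_boxHi d0 j
    have := boxLo_lt_boxHi d1 j
    constructor
    · exact le_max_right _ _
    · exact max_lt (by omega) (by omega)
  obtain ⟨hdom0, hR01, hR02⟩ := ht.1 d0 h0
  obtain ⟨hdom1, -, -⟩ := ht.1 d1 h1
  have hc0 : c = d0.1 ∨ c = d0.2 := domino_cells hdom0 c hx0
  have hc1 : c = d1.1 ∨ c = d1.2 := domino_cells hdom1 c hx1
  have hcR : c ∈ R := by rcases hc0 with h | h <;> rw [h] <;> assumption
  obtain ⟨d, -, hun⟩ := ht.2 c hcR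
  have e0 : d0 = d := hun d0 ⟨h0, hc0⟩
  have e1 : d1 = d := hun d1 ⟨h1, hc1⟩
  exact hne (e0.trans e1.symm)

lemma det_flip (v w u : Fin 3 → ℝ) :
    (Matrix.of ![w, v, -u]).det = (Matrix.of ![v, w, u]).det := by
  simp [Matrix.det_fin_three]; ring

lemma effect_self (u : Fin 3 → ℝ) (d : (Fin 3 → ℤ) × (Fin 3 → ℤ)) : effect u d d = 0 := by
  have h : (Matrix.of ![vvec d, vvec d, u]).det = 0 := by
    simp [Matrix.det_fin_three]; ring
  simp [effect, h]

lemma effect_symm {R : Finset (Fin 3 → ℤ)} {t : Finset ((Fin 3 → ℤ) × (Fin 3 → ℤ))}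
    (ht : IsTiling R t) {u : Fin 3 → ℝ}
    (hu : ∃ i : Fin 3, u = Pi.single i 1 ∨ u = -Pi.single i 1)
    {d0 d1 : (Fin 3 → ℤ) × (Fin 3 → ℤ)} (h0 : d0 ∈ t) (h1 : d1 ∈ t) :
    effect (-u) d1 d0 = effect u d0 d1 := by
  by_cases hne : d0 = d1
  · subst hne; rw [effect_self, effect_self]
  have hdisj := tiling_disjoint ht h0 h1 hne
  have hdisj' : ∃ j, boxHi d0 j ≤ boxLo d1 j ∨ boxHi d1 j ≤ boxLo d0 j := by
    obtain ⟨j, hj⟩ := hdisj; exact ⟨j, hj.symm⟩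
  have hdom0 := (ht.1 d0 h0).1
  have hdom1 := (ht.1 d1 h1).1
  have hdet : (Matrix.of ![vvec d0, vvec d1, -u]).det = (Matrix.of ![vvec d1, vvec d0, u]).det :=
    det_flip _ _ _
  obtain ⟨i, hi | hi⟩ := hu
  · subst hi
    have hcond := key_iff hdom0 hdom1 hdisj i
    simp only [effect]
    rw [hdet]
    exact if_congr hcond.symm rfl rfl
  · subst hi
    have hcond := key_iff hdom1 hdom0 hdisj' i
    rw [neg_neg] at hdet
    simp only [effect, neg_neg]
    rw [hdet]
    exact if_congr hcond rfl rfl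

/-- For any tiling `t` of a region `R` by dominoes and any unit coordinate
vector `u`, the `u`-pretwist equals the `(−u)`-pretwist: `T^{−u}(t) = T^{u}(t)`. -/
theorem pretwist_neg_eq (R : Finset (Fin 3 → ℤ)) (t : Finset ((Fin 3 → ℤ) × (Fin 3 → ℤ)))
    (ht : IsTiling R t) (u : Fin 3 → ℝ)
    (hu : ∃ i : Fin 3, u = Pi.single i 1 ∨ u = -Pi.single i 1) :
    pretwist (-u) t = pretwist u t := by
  rw [pretwist, pretwist]
  rw [Finset.sum_comm]
  refine Finset.sum_congr rfl fun d0 hd0 => Finset.sum_congr rfl fun d1 hd1 => ?_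
  exact effect_symm ht hu hd0 hd1

end
end

section
/- Every pseudocylinder D + [0,N]w (w a unit coordinate vector, D a planar region with connected interior, N ≥ 1) is fully balanced: for every 2×2 square Q of lattice points contained in the region with normal direction u ∈ {e_x,e_y,e_z}, the part of the region lying in the closed u-shade of Q contains equally many black and white unit cubes, and similarly for the (−u)-shade. -/
open scoped Classical

theorem shade_balanced
    (j : Fin 3) (N : ℕ)
    (D : Finset (Fin 3 → ℤ))
    (hDplane : ∀ x ∈ D, x j = 0)
    (R : Finset (Fin 3 → ℤ))
    (hR : ∀ c : Fin 3 → ℤ, c ∈ R ↔ ∃ x ∈ D, ∃ k : ℕ, k < N ∧ c = x + Pi.single j (k : ℤ))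
    (a : Fin 3) (p : Fin 3 → ℤ)
    (hQ : ∀ c : Fin 3 → ℤ, (∀ i, i ≠ a → (c i = p i ∨ c i = p i + 1)) →
      (Function.update c a (p a) ∈ R ∨ Function.update c a (p a - 1) ∈ R))
    (P : ℤ → Prop) [DecidablePred P] :
    ((R.filter fun c => (∀ i, i ≠ a → (c i = p i ∨ c i = p i + 1)) ∧ P (c a)).filter
        fun c => Even (∑ i, c i)).card =
      ((R.filter fun c => (∀ i, i ≠ a → (c i = p i ∨ c i = p i + 1)) ∧ P (c a)).filter
        fun c => ¬ Even (∑ i, c i)).card := by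
  classical
  -- characterization of membership in R
  have hRmem : ∀ c : Fin 3 → ℤ, c ∈ R ↔
      (0 ≤ c j ∧ c j < (N : ℤ) ∧ Function.update c j 0 ∈ D) := by
    intro c
    rw [hR]
    constructor
    · rintro ⟨x, hx, k, hk, rfl⟩
      have hxj := hDplane x hx
      refine ⟨by simp [hxj], by simp [hxj]; exact_mod_cast hk, ?_⟩
      have : Function.update (x + Pi.single j (k : ℤ)) j 0 = x := by
        funext i
        by_cases h : i = j
        · subst h; simp [hxj]
        · simp [Function.update, h, Pi.single_eq_of_ne h]
      rw [this]; exact hx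
    · rintro ⟨h0, hN', hD'⟩
      refine ⟨Function.update c j 0, hD', (c j).toNat, by omega, ?_⟩
      funext i
      by_cases h : i = j
      · subst h; simp; omega
      · simp [Function.update, h, Pi.single_eq_of_ne h]
  -- choice of the reflection direction b
  set b : Fin 3 := if a = j then a + 1 else j with hb
  have haux : ∀ x : Fin 3, x + 1 ≠ x := by decide
  have hba : b ≠ a := by
    rcases eq_or_ne a j with h | h
    · simp only [hb, if_pos h]; exact haux a
    · simp only [hb, if_neg h]; exact fun e => h e.symm
  have hcase : (a = j ∧ b ≠ j) ∨ (a ≠ j ∧ b = j) := by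
    rcases eq_or_ne a j with h | h
    · left; refine ⟨h, ?_⟩; simp only [hb, if_pos h]; rw [h]; exact haux j
    · right; exact ⟨h, by simp [hb, h]⟩
  -- the reflection
  set σ : (Fin 3 → ℤ) → (Fin 3 → ℤ) :=
    fun c => Function.update c b (2 * p b + 1 - c b) with hσ
  have hσb : ∀ c, σ c b = 2 * p b + 1 - c b := by intro c; simp [hσ]
  have hσo : ∀ c i, i ≠ b → σ c i = c i := by
    intro c i h; simp [hσ, Function.update, h]
  have hσinv : ∀ c, σ (σ c) = c := by
    intro c; funext i
    by_cases h : i = b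
    · subst h; rw [hσb, hσb]; ring
    · rw [hσo _ _ h, hσo _ _ h]
  have hσpar : ∀ c : Fin 3 → ℤ, Even (∑ i, σ c i) ↔ ¬ Even (∑ i, c i) := by
    intro c
    have h1 : ∑ i, σ c i = (2 * (p b - c b) + 1) + ∑ i, c i := by
      rw [← Finset.sum_erase_add _ _ (Finset.mem_univ b),
          ← Finset.sum_erase_add _ (fun i => c i) (Finset.mem_univ b)]
      have : ∑ i ∈ Finset.univ.erase b, σ c i = ∑ i ∈ Finset.univ.erase b, c i :=
        Finset.sum_congr rfl (fun i hi => hσo c i (Finset.ne_of_mem_erase hi))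
      rw [this, hσb]; ring
    rw [h1]
    simp [parity_simps]
    have hno : ¬ Odd (2 * (p b - c b)) := Int.not_odd_iff_even.mpr (even_two_mul _)
    simp only [hno, false_iff, Int.not_even_iff_odd]
  -- the reflection preserves the filtered set
  have hmain : ∀ c, c ∈ R → (∀ i, i ≠ a → (c i = p i ∨ c i = p i + 1)) →
      σ c ∈ R ∧ (∀ i, i ≠ a → (σ c i = p i ∨ σ c i = p i + 1)) := by
    intro c hcR hF
    have hFσ : ∀ i, i ≠ a → (σ c i = p i ∨ σ c i = p i + 1) := by
      intro i hia
      by_cases h : i = b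
      · subst h; rw [hσb]
        rcases hF b hba with h' | h' <;> [right; left] <;> omega
      · rw [hσo _ _ h]; exact hF i hia
    refine ⟨?_, hFσ⟩
    -- from hQ applied at σ c, get a cell d ∈ R agreeing with σ c off a
    have hd : ∃ v, Function.update (σ c) a v ∈ R := by
      rcases hQ (σ c) hFσ with h | h
      · exact ⟨p a, h⟩
      · exact ⟨p a - 1, h⟩
    obtain ⟨v, hdR⟩ := hd
    rw [hRmem] at hcR hdR ⊢
    obtain ⟨hc0, hcN, hcD⟩ := hcR
    obtain ⟨hd0, hdN, hdD⟩ := hdR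
    rcases hcase with ⟨haj, hbj⟩ | ⟨haj, hbj⟩
    · -- a = j, b ≠ j : height of σ c equals height of c; footprint from d
      have hσj : σ c j = c j := hσo c j (fun e => hbj e.symm)
      refine ⟨by rw [hσj]; exact hc0, by rw [hσj]; exact hcN, ?_⟩
      have : Function.update (Function.update (σ c) a v) j 0
          = Function.update (σ c) j 0 := by
        rw [← haj]; simp [Function.update_idem]
      rw [← this]; exact hdD
    · -- a ≠ j, b = j : footprint of σ c equals footprint of c; height from d
      have h1 : Function.update (σ c) a v j = σ c j :=
        Function.update_of_ne (fun e => haj e.symm) _ _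
      have h2 : Function.update (σ c) j 0 = Function.update c j 0 := by
        funext i
        by_cases h : i = j
        · subst h; simp
        · rw [Function.update_of_ne h, Function.update_of_ne h,
            hσo c i (by rw [hbj]; exact h)]
      rw [h1] at hd0 hdN
      exact ⟨hd0, hdN, by rw [h2]; exact hcD⟩
  refine Finset.card_bij' (fun c _ => σ c) (fun c _ => σ c) ?_ ?_ ?_ ?_
  · intro c hc
    simp only [Finset.mem_filter] at hc ⊢
    obtain ⟨⟨hcR, hF, hP⟩, hEv⟩ := hc
    obtain ⟨hσR, hσF⟩ := hmain c hcR hF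
    exact ⟨⟨hσR, hσF, by rwa [hσo c a hba.symm]⟩, by rw [hσpar]; simp [hEv]⟩
  · intro c hc
    simp only [Finset.mem_filter] at hc ⊢
    obtain ⟨⟨hcR, hF, hP⟩, hEv⟩ := hc
    obtain ⟨hσR, hσF⟩ := hmain c hcR hF
    exact ⟨⟨hσR, hσF, by rwa [hσo c a hba.symm]⟩, by rw [hσpar]; simpa using hEv⟩
  · intro c _; exact hσinv c
  · intro c _; exact hσinv c

/-- Every pseudocylinder `D + [0,N]·w` (`w = e_j` a unit coordinate vector,
`D` a planar region with connected interior, `N ≥ 1`) is fully balanced.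

Encoding: cells are minimal corners in `ℤ³`; the base `D` is a nonempty finite set of
cells lying in the plane `x j = 0` whose face-adjacency graph is connected (equivalent to
`D` having connected interior); the region is `R = {x + k·e_j | x ∈ D, 0 ≤ k < N}`.
A 2×2 square `Q` with normal `e_a` has corner `p` (it lies at height `p a` and its
footprint in the other two coordinates is `[p i, p i + 2]`); `Q ⊆ R` is expressed by
`hQ` (each point of `Q` lies in a cube of `R` directly above or below).  The conclusion:
both the part of `R` in the closed `+e_a`-shade of `Q` (cells with `p a ≤ c a`) and the
part in the closed `−e_a`-shade (cells with `c a < p a`) contain equally many white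
(even coordinate sum) and black cells. -/
theorem pseudocylinder_fully_balanced
    (j : Fin 3) (N : ℕ) (hN : 1 ≤ N)
    (D : Finset (Fin 3 → ℤ)) (hDne : D.Nonempty)
    (hDplane : ∀ x ∈ D, x j = 0)
    (hDconn : ∀ x ∈ D, ∀ y ∈ D,
      Relation.ReflTransGen (fun a b => a ∈ D ∧ b ∈ D ∧ (∑ i, |a i - b i|) = 1) x y)
    (R : Finset (Fin 3 → ℤ))
    (hR : ∀ c : Fin 3 → ℤ, c ∈ R ↔ ∃ x ∈ D, ∃ k : ℕ, k < N ∧ c = x + Pi.single j (k : ℤ))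
    (a : Fin 3) (p : Fin 3 → ℤ)
    (hQ : ∀ c : Fin 3 → ℤ, (∀ i, i ≠ a → (c i = p i ∨ c i = p i + 1)) →
      (Function.update c a (p a) ∈ R ∨ Function.update c a (p a - 1) ∈ R)) :
    ((R.filter fun c => (∀ i, i ≠ a → (c i = p i ∨ c i = p i + 1)) ∧ p a ≤ c a).filter
        fun c => Even (∑ i, c i)).card =
      ((R.filter fun c => (∀ i, i ≠ a → (c i = p i ∨ c i = p i + 1)) ∧ p a ≤ c a).filter
        fun c => ¬ Even (∑ i, c i)).card ∧
    ((R.filter fun c => (∀ i, i ≠ a → (c i = p i ∨ c i = p i + 1)) ∧ c a < p a).filter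
        fun c => Even (∑ i, c i)).card =
      ((R.filter fun c => (∀ i, i ≠ a → (c i = p i ∨ c i = p i + 1)) ∧ c a < p a).filter
        fun c => ¬ Even (∑ i, c i)).card :=
  ⟨shade_balanced j N D hDplane R hR a p hQ (fun t => p a ≤ t),
   shade_balanced j N D hDplane R hR a p hQ (fun t => t < p a)⟩
end

section
/- Let ℓ0, ℓ1 be two unit segments of a region R (each joining centers of two face-adjacent unit cubes), and let u ∈ R^3 with ‖u‖ < 1. Then there exist s0, s1 ∈ [0,1] with ℓ0(s0) − ℓ1(s1) = u if and only if there exist i, j ∈ {0,1} and a0, a1 ∈ (−1,1) with ℓ0(i) = ℓ1(j), u = a0·v(ℓ0) + a1·v(ℓ1), (−1)^i a0 ≥ 0 and (−1)^j a1 ≤ 0. -/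
/-- A point of `(ℤ + 1/2)³`, i.e. the center of a unit lattice cube. -/
def HalfLattice (p : Fin 3 → ℝ) : Prop := ∀ i, ∃ m : ℤ, p i = (m : ℝ) + 1 / 2

lemma key2 (x s ε : ℝ) (m : ℤ) (hε : ε = 1 ∨ ε = -1)
    (hs0 : 0 ≤ s) (hs1 : s ≤ 1) (hx0 : -1 < x) (hx1 : x < 1)
    (hm : x = m + s * ε) :
    ∃ i : ℕ, i ≤ 1 ∧ ∃ a : ℝ, -1 < a ∧ a < 1 ∧ (m : ℝ) = -(i : ℝ) * ε ∧
      x = a * ε ∧ 0 ≤ (-1 : ℝ) ^ i * a := by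
  rcases hε with rfl | rfl
  · have hb1 : (-2 : ℤ) < m := by exact_mod_cast show (-2:ℝ) < m by linarith
    have hb2 : m < 1 := by exact_mod_cast show (m:ℝ) < (1:ℝ) by linarith
    interval_cases m
    · exact ⟨1, le_refl _, x, hx0, hx1, by norm_num, by ring, by push_cast at hm; norm_num; linarith⟩
    · exact ⟨0, by norm_num, x, hx0, hx1, by norm_num, by ring, by push_cast at hm; norm_num; linarith⟩
  · have hb1 : (-1 : ℤ) < m := by exact_mod_cast show (-1:ℝ) < m by linarith
    have hb2 : m < 2 := by exact_mod_cast show (m:ℝ) < (2:ℝ) by linarith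
    interval_cases m
    · exact ⟨0, by norm_num, -x, by linarith, by linarith, by norm_num, by ring, by push_cast at hm; norm_num; linarith⟩
    · exact ⟨1, le_refl _, -x, by linarith, by linarith, by norm_num, by ring, by push_cast at hm; norm_num; linarith⟩

lemma key2' (x s ε : ℝ) (m : ℤ) (hε : ε = 1 ∨ ε = -1)
    (hs0 : 0 ≤ s) (hs1 : s ≤ 1) (hx0 : -1 < x) (hx1 : x < 1)
    (hm : x = m - s * ε) :
    ∃ j : ℕ, j ≤ 1 ∧ ∃ a : ℝ, -1 < a ∧ a < 1 ∧ (m : ℝ) = (j : ℝ) * ε ∧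
      x = a * ε ∧ (-1 : ℝ) ^ j * a ≤ 0 := by
  obtain ⟨i, hi, a, h1, h2, h3, h4, h5⟩ :=
    key2 (-x) s ε (-m) hε hs0 hs1 (by linarith) (by linarith) (by push_cast; linarith)
  refine ⟨i, hi, -a, by linarith, by linarith, by push_cast at h3 ⊢; linarith,
    by linarith, ?_⟩
  have : (-1:ℝ)^i * (-a) = -((-1:ℝ)^i * a) := by ring
  rw [this]; linarith

lemma key1 (x s0 s1 ε0 ε1 : ℝ) (m : ℤ) (hε0 : ε0 = 1 ∨ ε0 = -1) (hε1 : ε1 = 1 ∨ ε1 = -1)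
    (hs00 : 0 ≤ s0) (hs01 : s0 ≤ 1) (hs10 : 0 ≤ s1) (hs11 : s1 ≤ 1)
    (hx0 : -1 < x) (hx1 : x < 1) (hm : x = m + s0 * ε0 - s1 * ε1) :
    ∃ i j : ℕ, i ≤ 1 ∧ j ≤ 1 ∧ ∃ a0 a1 : ℝ, -1 < a0 ∧ a0 < 1 ∧ -1 < a1 ∧ a1 < 1 ∧
      (m : ℝ) = (j : ℝ) * ε1 - (i : ℝ) * ε0 ∧ x = a0 * ε0 + a1 * ε1 ∧
      0 ≤ (-1:ℝ)^i * a0 ∧ (-1:ℝ)^j * a1 ≤ 0 := by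
  rcases hε0 with rfl | rfl <;> rcases hε1 with rfl | rfl <;> norm_num at hm
  · -- ε0 = 1, ε1 = 1 ; x = m + s0 - s1, m ∈ {-1,0,1}
    have hb1 : (-2 : ℤ) < m := by exact_mod_cast show (-2:ℝ) < m by linarith
    have hb2 : m < 2 := by exact_mod_cast show (m:ℝ) < (2:ℝ) by linarith
    interval_cases m <;> push_cast at hm
    · exact ⟨1, 0, by norm_num, by norm_num, x, 0, hx0, hx1, by norm_num, by norm_num,
        by norm_num, by norm_num, by norm_num; linarith, by norm_num⟩
    · rcases le_or_gt 0 x with h | h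
      · exact ⟨0, 0, by norm_num, by norm_num, x, 0, hx0, hx1, by norm_num, by norm_num,
          by norm_num, by norm_num, by norm_num; linarith, by norm_num⟩
      · exact ⟨0, 0, by norm_num, by norm_num, 0, x, by norm_num, by norm_num, hx0, hx1,
          by norm_num, by norm_num, by norm_num, by norm_num; linarith⟩
    · exact ⟨0, 1, by norm_num, by norm_num, x, 0, hx0, hx1, by norm_num, by norm_num,
        by norm_num, by norm_num, by norm_num; linarith, by norm_num⟩
  · -- ε0 = 1, ε1 = -1 ; x = m + s0 + s1, m ∈ {-2,-1,0}
    have hb1 : (-3 : ℤ) < m := by exact_mod_cast show (-3:ℝ) < m by linarith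
    have hb2 : m < 1 := by exact_mod_cast show (m:ℝ) < (1:ℝ) by linarith
    interval_cases m <;> push_cast at hm
    · exact ⟨1, 1, by norm_num, by norm_num, x, 0, hx0, hx1, by norm_num, by norm_num,
        by norm_num, by norm_num, by norm_num; linarith, by norm_num⟩
    · rcases le_or_gt 0 x with h | h
      · exact ⟨0, 1, by norm_num, by norm_num, x, 0, hx0, hx1, by norm_num, by norm_num,
          by norm_num, by norm_num, by norm_num; linarith, by norm_num⟩
      · exact ⟨1, 0, by norm_num, by norm_num, x, 0, hx0, hx1, by norm_num, by norm_num,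
          by norm_num, by norm_num, by norm_num; linarith, by norm_num⟩
    · exact ⟨0, 0, by norm_num, by norm_num, x, 0, hx0, hx1, by norm_num, by norm_num,
        by norm_num, by norm_num, by norm_num; linarith, by norm_num⟩
  · -- ε0 = -1, ε1 = 1 ; x = m - s0 - s1, m ∈ {0,1,2}
    have hb1 : (-1 : ℤ) < m := by exact_mod_cast show (-1:ℝ) < m by linarith
    have hb2 : m < 3 := by exact_mod_cast show (m:ℝ) < (3:ℝ) by linarith
    interval_cases m <;> push_cast at hm
    · exact ⟨0, 0, by norm_num, by norm_num, -x, 0, by linarith, by linarith, by norm_num,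
        by norm_num, by norm_num, by ring, by norm_num; linarith, by norm_num⟩
    · rcases le_or_gt 0 x with h | h
      · exact ⟨1, 0, by norm_num, by norm_num, -x, 0, by linarith, by linarith, by norm_num,
          by norm_num, by norm_num, by ring, by norm_num; linarith, by norm_num⟩
      · exact ⟨0, 1, by norm_num, by norm_num, -x, 0, by linarith, by linarith, by norm_num,
          by norm_num, by norm_num, by ring, by norm_num; linarith, by norm_num⟩
    · exact ⟨1, 1, by norm_num, by norm_num, -x, 0, by linarith, by linarith, by norm_num,
        by norm_num, by norm_num, by ring, by norm_num; linarith, by norm_num⟩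
  · -- ε0 = -1, ε1 = -1 ; x = m - s0 + s1, m ∈ {-1,0,1}
    have hb1 : (-2 : ℤ) < m := by exact_mod_cast show (-2:ℝ) < m by linarith
    have hb2 : m < 2 := by exact_mod_cast show (m:ℝ) < (2:ℝ) by linarith
    interval_cases m <;> push_cast at hm
    · exact ⟨0, 1, by norm_num, by norm_num, -x, 0, by linarith, by linarith, by norm_num,
        by norm_num, by norm_num, by ring, by norm_num; linarith, by norm_num⟩
    · rcases le_or_gt 0 x with h | h
      · exact ⟨1, 1, by norm_num, by norm_num, -x, 0, by linarith, by linarith, by norm_num,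
          by norm_num, by norm_num, by ring, by norm_num; linarith, by norm_num⟩
      · exact ⟨0, 0, by norm_num, by norm_num, -x, 0, by linarith, by linarith, by norm_num,
          by norm_num, by norm_num, by ring, by norm_num; linarith, by norm_num⟩
    · exact ⟨1, 0, by norm_num, by norm_num, -x, 0, by linarith, by linarith, by norm_num,
        by norm_num, by norm_num, by ring, by norm_num; linarith, by norm_num⟩

/-- Let `ℓ0, ℓ1` be two unit segments of a region (each joining centers of
two face-adjacent unit cubes, here `ℓ0(s) = p0 + s·(p1−p0)`, `ℓ1(s) = q0 + s·(q1−q0)`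
with `p0,p1,q0,q1 ∈ (ℤ+1/2)³` differing by unit coordinate vectors), and let `u ∈ ℝ³`
with `‖u‖ < 1` (Euclidean).  Then there exist `s0, s1 ∈ [0,1]` with
`ℓ0(s0) − ℓ1(s1) = u` if and only if there exist `i, j ∈ {0,1}` and
`a0, a1 ∈ (−1,1)` with `ℓ0(i) = ℓ1(j)`, `u = a0·v(ℓ0) + a1·v(ℓ1)`,
`(−1)^i a0 ≥ 0` and `(−1)^j a1 ≤ 0`. -/
theorem segment_intersection_characterization
    (p0 p1 q0 q1 : Fin 3 → ℝ)
    (hp0 : HalfLattice p0) (hp1 : HalfLattice p1)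
    (hq0 : HalfLattice q0) (hq1 : HalfLattice q1)
    (hstep0 : ∃ i : Fin 3, p1 - p0 = Pi.single i 1 ∨ p1 - p0 = -Pi.single i 1)
    (hstep1 : ∃ i : Fin 3, q1 - q0 = Pi.single i 1 ∨ q1 - q0 = -Pi.single i 1)
    (u : Fin 3 → ℝ) (hu : ∑ i, (u i) ^ 2 < 1) :
    (∃ s0 ∈ Set.Icc (0 : ℝ) 1, ∃ s1 ∈ Set.Icc (0 : ℝ) 1,
        (p0 + s0 • (p1 - p0)) - (q0 + s1 • (q1 - q0)) = u) ↔
    (∃ i j : ℕ, i ≤ 1 ∧ j ≤ 1 ∧ ∃ a0 a1 : ℝ,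
        a0 ∈ Set.Ioo (-1 : ℝ) 1 ∧ a1 ∈ Set.Ioo (-1 : ℝ) 1 ∧
        p0 + (i : ℝ) • (p1 - p0) = q0 + (j : ℝ) • (q1 - q0) ∧
        u = a0 • (p1 - p0) + a1 • (q1 - q0) ∧
        0 ≤ (-1 : ℝ) ^ i * a0 ∧ (-1 : ℝ) ^ j * a1 ≤ 0) := by
  have hubd : ∀ k, -1 < u k ∧ u k < 1 := by
    intro k
    have h1 : (u k) ^ 2 ≤ ∑ i, (u i) ^ 2 :=
      Finset.single_le_sum (f := fun i => (u i) ^ 2) (fun i _ => sq_nonneg _) (Finset.mem_univ k)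
    have h2 : (u k) ^ 2 < 1 := lt_of_le_of_lt h1 hu
    constructor <;> nlinarith [h2]
  have hdint : ∀ k, ∃ m : ℤ, p0 k - q0 k = (m : ℝ) := by
    intro k
    obtain ⟨mp, hmp⟩ := hp0 k
    obtain ⟨mq, hmq⟩ := hq0 k
    exact ⟨mp - mq, by push_cast; rw [hmp, hmq]; ring⟩
  obtain ⟨a, ε0, hε0, hv0⟩ : ∃ a : Fin 3, ∃ ε0 : ℝ, (ε0 = 1 ∨ ε0 = -1) ∧
      ∀ k, (p1 - p0) k = ε0 * (if k = a then 1 else 0) := by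
    rcases hstep0 with ⟨a, h | h⟩
    · exact ⟨a, 1, Or.inl rfl, fun k => by rw [h]; simp [Pi.single_apply]⟩
    · exact ⟨a, -1, Or.inr rfl, fun k => by
        rw [h]; simp only [Pi.neg_apply, Pi.single_apply]; split <;> ring⟩
  obtain ⟨b, ε1, hε1, hv1⟩ : ∃ b : Fin 3, ∃ ε1 : ℝ, (ε1 = 1 ∨ ε1 = -1) ∧
      ∀ k, (q1 - q0) k = ε1 * (if k = b then 1 else 0) := by
    rcases hstep1 with ⟨b, h | h⟩
    · exact ⟨b, 1, Or.inl rfl, fun k => by rw [h]; simp [Pi.single_apply]⟩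
    · exact ⟨b, -1, Or.inr rfl, fun k => by
        rw [h]; simp only [Pi.neg_apply, Pi.single_apply]; split <;> ring⟩
  simp only [Pi.sub_apply] at hv0 hv1
  constructor
  · rintro ⟨s0, ⟨hs00, hs01⟩, s1, ⟨hs10, hs11⟩, heq⟩
    have heqk : ∀ k, (p0 k - q0 k) + s0 * (p1 k - p0 k) - s1 * (q1 k - q0 k) = u k := by
      intro k
      have hk := congrFun heq k
      simp only [Pi.add_apply, Pi.sub_apply, Pi.smul_apply, smul_eq_mul] at hk
      linarith [hk]
    have hzero : ∀ k, k ≠ a → k ≠ b → p0 k - q0 k = 0 ∧ u k = 0 := by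
      intro k hka hkb
      have h := heqk k
      rw [hv0 k, hv1 k, if_neg hka, if_neg hkb] at h
      have hdu : p0 k - q0 k = u k := by linarith
      obtain ⟨m, hm⟩ := hdint k
      have h1 : (-1 : ℤ) < m := by
        exact_mod_cast show (-1:ℝ) < (m:ℝ) by rw [← hm, hdu]; exact (hubd k).1
      have h2 : m < 1 := by
        exact_mod_cast show (m:ℝ) < (1:ℝ) by rw [← hm, hdu]; exact (hubd k).2
      have hm0 : m = 0 := by omega
      subst hm0
      simp only [Int.cast_zero] at hm
      exact ⟨hm, by linarith⟩
    by_cases hab : a = b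
    · subst hab
      obtain ⟨m, hdm⟩ := hdint a
      have hx : u a = (m : ℝ) + s0 * ε0 - s1 * ε1 := by
        have h := heqk a
        rw [hv0 a, hv1 a, if_pos rfl] at h
        rw [← hdm]; linarith
      obtain ⟨i, j, hi, hj, a0, a1, h1, h2, h3, h4, hmeq, hxeq, hsg0, hsg1⟩ :=
        key1 (u a) s0 s1 ε0 ε1 m hε0 hε1 hs00 hs01 hs10 hs11 (hubd a).1 (hubd a).2 hx
      refine ⟨i, j, hi, hj, a0, a1, ⟨h1, h2⟩, ⟨h3, h4⟩, ?_, ?_, hsg0, hsg1⟩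
      · funext k
        simp only [Pi.add_apply, Pi.sub_apply, Pi.smul_apply, smul_eq_mul]
        rw [hv0 k, hv1 k]
        by_cases hka : k = a
        · subst hka
          rw [if_pos rfl]
          have : p0 k - q0 k = (j : ℝ) * ε1 - (i : ℝ) * ε0 := by rw [hdm]; exact hmeq
          linarith
        · rw [if_neg hka]
          have := (hzero k hka hka).1
          linarith
      · funext k
        simp only [Pi.add_apply, Pi.sub_apply, Pi.smul_apply, smul_eq_mul]
        rw [hv0 k, hv1 k]
        by_cases hka : k = a
        · subst hka; rw [if_pos rfl]; linarith [hxeq]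
        · rw [if_neg hka]
          have := (hzero k hka hka).2
          linarith
    · obtain ⟨m, hdm⟩ := hdint a
      obtain ⟨m', hdm'⟩ := hdint b
      have hxa : u a = (m : ℝ) + s0 * ε0 := by
        have h := heqk a
        rw [hv0 a, hv1 a, if_pos rfl, if_neg hab] at h
        rw [← hdm]; linarith
      have hxb : u b = (m' : ℝ) - s1 * ε1 := by
        have h := heqk b
        rw [hv0 b, hv1 b, if_pos rfl, if_neg (Ne.symm hab)] at h
        rw [← hdm']; linarith
      obtain ⟨i, hi, a0, h1, h2, hmeq, hxeq, hsg0⟩ :=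
        key2 (u a) s0 ε0 m hε0 hs00 hs01 (hubd a).1 (hubd a).2 hxa
      obtain ⟨j, hj, a1, h3, h4, hmeq', hxeq', hsg1⟩ :=
        key2' (u b) s1 ε1 m' hε1 hs10 hs11 (hubd b).1 (hubd b).2 hxb
      refine ⟨i, j, hi, hj, a0, a1, ⟨h1, h2⟩, ⟨h3, h4⟩, ?_, ?_, hsg0, hsg1⟩
      · funext k
        simp only [Pi.add_apply, Pi.sub_apply, Pi.smul_apply, smul_eq_mul]
        rw [hv0 k, hv1 k]
        by_cases hka : k = a
        · subst hka
          rw [if_pos rfl, if_neg hab]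
          have : p0 k - q0 k = -(i : ℝ) * ε0 := by rw [hdm]; exact hmeq
          linarith
        · rw [if_neg hka]
          by_cases hkb : k = b
          · subst hkb
            rw [if_pos rfl]
            have : p0 k - q0 k = (j : ℝ) * ε1 := by rw [hdm']; exact hmeq'
            linarith
          · rw [if_neg hkb]
            have := (hzero k hka hkb).1
            linarith
      · funext k
        simp only [Pi.add_apply, Pi.sub_apply, Pi.smul_apply, smul_eq_mul]
        rw [hv0 k, hv1 k]
        by_cases hka : k = a
        · subst hka
          rw [if_pos rfl, if_neg hab]
          linarith [hxeq]
        · rw [if_neg hka]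
          by_cases hkb : k = b
          · subst hkb; rw [if_pos rfl]; linarith [hxeq']
          · rw [if_neg hkb]
            have := (hzero k hka hkb).2
            linarith
  · rintro ⟨i, j, hi, hj, a0, a1, ⟨ha00, ha01⟩, ⟨ha10, ha11⟩, hend, huv, hsg0, hsg1⟩
    refine ⟨(i : ℝ) + a0, ?_, (j : ℝ) - a1, ?_, ?_⟩
    · interval_cases i <;> norm_num at hsg0 ⊢ <;> constructor <;> linarith
    · interval_cases j <;> norm_num at hsg1 ⊢ <;> constructor <;> linarith
    · funext k
      have hek := congrFun hend k
      have huk := congrFun huv k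
      simp only [Pi.add_apply, Pi.sub_apply, Pi.smul_apply, smul_eq_mul] at hek huk ⊢
      nlinarith [hek, huk]
end

section
/- Let γ be a closed lattice curve in R^3 composed of unit segments joining points of (Z+1/2)^3, let β = (b1,b2,b3) be a positively oriented basis of unit coordinate vectors, and let u = a·b1 + b·b2 + c·b3 with ‖u‖ < 1 and abc ≠ 0. Then the curves γ and γ + u are disjoint. -/
private lemma third_idx : ∀ d d' : Fin 3, ∃ j : Fin 3, j ≠ d ∧ j ≠ d' := by decide

/-- Let `γ : [0,n] → ℝ³` be a closed lattice curve composed of unit segments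
joining points of `(ℤ+1/2)³`, let `β = (b1,b2,b3)` be a positively oriented basis of unit
coordinate vectors, and let `u = a·b1 + b·b2 + c·b3` with `‖u‖ < 1` (Euclidean, i.e.
`a² + b² + c² < 1`) and `abc ≠ 0`.  Then the curves `γ` and `γ + u` are disjoint. -/
theorem curve_translate_disjoint
    (n : ℕ) (hn : 0 < n) (γ : ℝ → Fin 3 → ℝ)
    (hlat : ∀ k : ℕ, k ≤ n → ∀ i, ∃ m : ℤ, γ k i = (m : ℝ) + 1 / 2)
    (hstep : ∀ k : ℕ, k < n → ∃ i : Fin 3,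
      γ (k + 1) - γ k = Pi.single i 1 ∨ γ (k + 1) - γ k = -Pi.single i 1)
    (haff : ∀ k : ℕ, k < n → ∀ s ∈ Set.Icc (k : ℝ) ((k : ℝ) + 1),
      γ s = γ k + (s - (k : ℝ)) • (γ (k + 1) - γ k))
    (hclosed : γ n = γ 0)
    (b1 b2 b3 : Fin 3 → ℝ)
    (hb1 : ∃ i : Fin 3, b1 = Pi.single i 1 ∨ b1 = -Pi.single i 1)
    (hb2 : ∃ i : Fin 3, b2 = Pi.single i 1 ∨ b2 = -Pi.single i 1)
    (hb3 : ∃ i : Fin 3, b3 = Pi.single i 1 ∨ b3 = -Pi.single i 1)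
    (hpos : (Matrix.of ![b1, b2, b3]).det = 1)
    (a b c : ℝ) (habc : a * b * c ≠ 0) (hnorm : a ^ 2 + b ^ 2 + c ^ 2 < 1) :
    ∀ s ∈ Set.Icc (0 : ℝ) (n : ℝ), ∀ s' ∈ Set.Icc (0 : ℝ) (n : ℝ),
      γ s ≠ γ s' + (a • b1 + b • b2 + c • b3) := by
  have ha : a ≠ 0 := fun h => habc (by simp [h])
  have hb : b ≠ 0 := fun h => habc (by simp [h])
  have hc : c ≠ 0 := fun h => habc (by simp [h])
  obtain ⟨i1, h1⟩ := hb1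
  obtain ⟨i2, h2⟩ := hb2
  obtain ⟨i3, h3⟩ := hb3
  have e1 : ∀ j, j ≠ i1 → b1 j = 0 := by
    intro j hj; rcases h1 with h | h <;> simp [h, Pi.single_eq_of_ne hj]
  have e2 : ∀ j, j ≠ i2 → b2 j = 0 := by
    intro j hj; rcases h2 with h | h <;> simp [h, Pi.single_eq_of_ne hj]
  have e3 : ∀ j, j ≠ i3 → b3 j = 0 := by
    intro j hj; rcases h3 with h | h <;> simp [h, Pi.single_eq_of_ne hj]
  have colzero : ∀ j : Fin 3, j ≠ i1 → j ≠ i2 → j ≠ i3 → False := by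
    intro j hj1 hj2 hj3
    have hz : (Matrix.of ![b1, b2, b3]).det = 0 := by
      apply Matrix.det_eq_zero_of_column_eq_zero j
      intro i
      fin_cases i <;>
        simp [Matrix.of_apply, Matrix.vecHead, Matrix.vecTail, e1 _ hj1, e2 _ hj2, e3 _ hj3]
    rw [hpos] at hz; norm_num at hz
  have key : ∀ j : Fin 3,
      a * b1 j + b * b2 j + c * b3 j ≠ 0 ∧
      (a * b1 j + b * b2 j + c * b3 j) ^ 2 < 1 := by
    intro j
    by_cases hj1 : j = i1
    · by_cases hj2 : j = i2
      · obtain ⟨j', hx, hy⟩ := third_idx j i3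
        exact (colzero j' (hj1 ▸ hx) (hj2 ▸ hx) hy).elim
      · by_cases hj3 : j = i3
        · obtain ⟨j', hx, hy⟩ := third_idx j i2
          exact (colzero j' (hj1 ▸ hx) hy (hj3 ▸ hx)).elim
        · have v2 := e2 j hj2
          have v3 := e3 j hj3
          have v1 : b1 j = 1 ∨ b1 j = -1 := by
            rcases h1 with h | h <;> rw [h] <;> subst hj1 <;> simp
          rcases v1 with h | h <;>
            · rw [h, v2, v3]
              constructor
              · simpa using ha
              · nlinarith [sq_nonneg b, sq_nonneg c]
    · by_cases hj2 : j = i2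
      · by_cases hj3 : j = i3
        · obtain ⟨j', hx, hy⟩ := third_idx j i1
          exact (colzero j' hy (hj2 ▸ hx) (hj3 ▸ hx)).elim
        · have v1 := e1 j hj1
          have v3 := e3 j hj3
          have v2 : b2 j = 1 ∨ b2 j = -1 := by
            rcases h2 with h | h <;> rw [h] <;> subst hj2 <;> simp
          rcases v2 with h | h <;>
            · rw [h, v1, v3]
              constructor
              · simpa using hb
              · nlinarith [sq_nonneg a, sq_nonneg c]
      · by_cases hj3 : j = i3
        · have v1 := e1 j hj1
          have v2 := e2 j hj2
          have v3 : b3 j = 1 ∨ b3 j = -1 := by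
            rcases h3 with h | h <;> rw [h] <;> subst hj3 <;> simp
          rcases v3 with h | h <;>
            · rw [h, v1, v2]
              constructor
              · simpa using hc
              · nlinarith [sq_nonneg a, sq_nonneg b]
        · exact (colzero j hj1 hj2 hj3).elim
  have seg : ∀ s : ℝ, s ∈ Set.Icc (0 : ℝ) (n : ℝ) →
      ∃ k : ℕ, k < n ∧ (k : ℝ) ≤ s ∧ s ≤ (k : ℝ) + 1 := by
    intro s hs
    by_cases hsn : s < n
    · refine ⟨⌊s⌋.toNat, ?_, ?_, ?_⟩
      · have h0 : (0 : ℤ) ≤ ⌊s⌋ := Int.floor_nonneg.2 hs.1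
        have h1 : ((⌊s⌋.toNat : ℤ) : ℝ) ≤ s := by
          rw [Int.toNat_of_nonneg h0]; exact Int.floor_le s
        have : ((⌊s⌋.toNat : ℕ) : ℝ) < (n : ℝ) := by
          push_cast at h1 ⊢; linarith
        exact_mod_cast this
      · have h0 : (0 : ℤ) ≤ ⌊s⌋ := Int.floor_nonneg.2 hs.1
        have h1 : ((⌊s⌋.toNat : ℤ) : ℝ) ≤ s := by
          rw [Int.toNat_of_nonneg h0]; exact Int.floor_le s
        exact_mod_cast h1
      · have h0 : (0 : ℤ) ≤ ⌊s⌋ := Int.floor_nonneg.2 hs.1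
        have h1 : s < ((⌊s⌋.toNat : ℤ) : ℝ) + 1 := by
          rw [Int.toNat_of_nonneg h0]; exact Int.lt_floor_add_one s
        have := h1.le
        exact_mod_cast this
    · have hs' : s = n := le_antisymm hs.2 (not_lt.1 hsn)
      refine ⟨n - 1, Nat.sub_lt hn one_pos, ?_, ?_⟩
      · rw [hs']
        have : ((n - 1 : ℕ) : ℝ) ≤ (n : ℝ) := by
          exact_mod_cast Nat.sub_le n 1
        exact this
      · rw [hs']
        have : ((n - 1 : ℕ) : ℝ) + 1 = (n : ℝ) := by
          have : (1 : ℕ) ≤ n := hn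
          push_cast [Nat.cast_sub this]; ring
        rw [this]
  intro s hs s' hs' heq
  obtain ⟨k, hk, hks1, hks2⟩ := seg s hs
  obtain ⟨k', hk', hks1', hks2'⟩ := seg s' hs'
  have Hs := haff k hk s ⟨hks1, hks2⟩
  have Hs' := haff k' hk' s' ⟨hks1', hks2'⟩
  obtain ⟨d, hd⟩ := hstep k hk
  obtain ⟨d', hd'⟩ := hstep k' hk'
  obtain ⟨j, hjd, hjd'⟩ := third_idx d d'
  have hv : (γ (k + 1) - γ k) j = 0 := by
    rcases hd with h | h <;> rw [h] <;> simp [Pi.single_eq_of_ne hjd]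
  have hv' : (γ (k' + 1) - γ k') j = 0 := by
    rcases hd' with h | h <;> rw [h] <;> simp [Pi.single_eq_of_ne hjd']
  obtain ⟨m, hm⟩ := hlat k hk.le j
  obtain ⟨m', hm'⟩ := hlat k' hk'.le j
  have hj := congrFun heq j
  rw [Hs, Hs'] at hj
  simp only [Pi.add_apply, Pi.smul_apply, smul_eq_mul] at hj
  rw [hv, hv'] at hj
  have hu : a * b1 j + b * b2 j + c * b3 j = (m : ℝ) - (m' : ℝ) := by
    rw [hm, hm'] at hj; linarith
  obtain ⟨hne, hsq⟩ := key j
  rw [hu] at hne hsq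
  have habs : |((m - m' : ℤ) : ℝ)| < 1 := by
    rw [abs_lt]
    constructor <;> push_cast <;> nlinarith
  have : |m - m'| < 1 := by exact_mod_cast habs
  have habs2 := abs_lt.1 this
  have : m = m' := by omega
  rw [this] at hne
  simp at hne
end

section
/- Define g*: N → Z by the recurrence bound g*(n) ≤ min over 0 ≤ k ≤ (n−1)/4 of [4k² + n − 4k + g*(n−4k−1) + 2g*(2k)] with g*(0) = 0 (g* defined as the minimal function satisfying this, i.e., g*(n) equals that minimum). Then g*(n) < 2n^{3/2} for all n ≥ 1. -/
/-- Auxiliary bound function. -/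
def Bb (n : ℕ) : ℤ := if n = 0 then 0 else if n = 3 then 6 else 2 * n * (Nat.sqrt n) - 1

lemma Bb_le (n : ℕ) : Bb n ≤ 2 * n * (Nat.sqrt n) := by
  unfold Bb
  split_ifs with h1 h2
  · simp [h1]
  · subst h2; norm_num [Nat.sqrt]
  · linarith

lemma sqrtval (a r : ℕ) (h1 : a * a ≤ a * a + r) (h2 : a * a + r < (a+1)*(a+1)) :
    Nat.sqrt (a * a + r) = a := by
  have l1 : a ≤ Nat.sqrt (a*a+r) := Nat.le_sqrt.mpr h1
  have l2 : Nat.sqrt (a*a+r) < a + 1 := Nat.sqrt_lt.mpr (by simpa [mul_add, add_mul] using h2)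
  omega

lemma BbV : Bb 0 = 0 ∧ Bb 1 = 1 ∧ Bb 2 = 3 ∧ Bb 3 = 6 ∧ Bb 4 = 15 := by
  have q1 : Nat.sqrt 1 = 1 := by simpa using sqrtval 1 0 (by norm_num) (by norm_num)
  have q2 : Nat.sqrt 2 = 1 := by simpa using sqrtval 1 1 (by norm_num) (by norm_num)
  have q4 : Nat.sqrt 4 = 2 := by simpa using sqrtval 2 0 (by norm_num) (by norm_num)
  refine ⟨?_, ?_, ?_, ?_, ?_⟩ <;> simp [Bb, q1, q2, q4]

lemma core (n s k m t u : ℤ) (hs : 2 ≤ s) (hk : s = 2*k ∨ s = 2*k+1)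
    (hn1 : s*s ≤ n) (hn2 : n ≤ s*s + 2*s) (hm : m = n - 4*k - 1) (hm0 : 0 ≤ m)
    (ht0 : 0 ≤ t) (ht1 : t*t ≤ m)
    (hu0 : 0 ≤ u) (hu1 : u*u ≤ 2*k) :
    4*k^2 + n - 4*k + 2*m*t + 4*(2*k)*u ≤ 2*n*s - 1 := by
  have hk1 : 1 ≤ k := by omega
  have hu2 : u ≤ k := by nlinarith
  have h8ku : 4*(2*k)*u ≤ 8*k*k := by nlinarith
  rcases hk with he | ho
  · have ht : t ≤ 2*k - 1 := by nlinarith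
    have h2mt : 2*m*t ≤ 2*m*(2*k-1) := by
      have := mul_le_mul_of_nonneg_left ht (by linarith : (0:ℤ) ≤ 2*m)
      linarith
    nlinarith
  · rcases le_or_gt t (2*k) with h1 | h2
    · have h2mt : 2*m*t ≤ 2*m*(2*k) := by
        have := mul_le_mul_of_nonneg_left h1 (by linarith : (0:ℤ) ≤ 2*m)
        linarith
      nlinarith
    · have ht : t = 2*k + 1 := by nlinarith
      subst ht
      nlinarith

/-- Let `g* : ℕ → ℤ` be the minimal function with `g*(0) = 0` satisfying
the recurrence `g*(n) = min over 0 ≤ k, 4k+1 ≤ n of [4k² + n − 4k + g*(n−4k−1) + 2g*(2k)]`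
(for `n ≥ 1`; i.e. `g*(n)` equals that minimum).  Then `g*(n) < 2n^{3/2}` for all `n ≥ 1`. -/
theorem gstar_lt (g : ℕ → ℤ) (h0 : g 0 = 0)
    (hmin : ∀ n : ℕ, 1 ≤ n →
      IsLeast {x : ℤ | ∃ k : ℕ, 4 * k + 1 ≤ n ∧
        x = 4 * (k : ℤ) ^ 2 + (n : ℤ) - 4 * (k : ℤ) + g (n - 4 * k - 1) + 2 * g (2 * k)}
        (g n)) :
    ∀ n : ℕ, 1 ≤ n → (g n : ℝ) < 2 * (n : ℝ) ^ (3 / 2 : ℝ) := by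
  have hub : ∀ n : ℕ, 1 ≤ n → ∀ k : ℕ, 4 * k + 1 ≤ n →
      g n ≤ 4 * (k : ℤ) ^ 2 + (n : ℤ) - 4 * (k : ℤ) + g (n - 4 * k - 1) + 2 * g (2 * k) := by
    intro n hn k hk
    exact (hmin n hn).2 ⟨k, hk, rfl⟩
  -- main bound : g n ≤ Bb n for all n
  have key : ∀ n : ℕ, g n ≤ Bb n := by
    intro n
    induction n using Nat.strong_induction_on with
    | _ n ih =>
      match n, ih with
      | 0, _ => simp [h0, Bb]
      | (n+1), ih =>
        set N := n + 1 with hN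
        have hN1 : 1 ≤ N := Nat.le_add_left 1 n
        by_cases hsmall : N ≤ 4
        · -- base cases, use k = 0
          have hprev : g (N - 1) ≤ Bb (N - 1) := ih _ (by omega)
          have h : g N ≤ (N : ℤ) + g (N - 1) := by
            have h' := hub N hN1 0 (by omega)
            simp only [Nat.cast_zero, mul_zero, Nat.mul_zero, Nat.sub_zero] at h'
            rw [h0] at h'
            push_cast at h' ⊢
            linarith
          obtain ⟨e0, e1, e2, e3, e4⟩ := BbV
          interval_cases N <;> norm_num [e0, e1, e2, e3, e4] at hprev h ⊢ <;> linarith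
        · -- n ≥ 5
          have h5 : 5 ≤ N := by omega
          set s := Nat.sqrt N with hs
          set k := s / 2 with hkdef
          have hs2 : 2 ≤ s := by
            rw [hs]
            exact Nat.le_sqrt.mpr (by omega)
          have hss : s * s ≤ N := by rw [hs]; simpa [pow_two] using Nat.sqrt_le' N
          have hss2 : N < (s+1) * (s+1) := by
            rw [hs]; simpa [pow_two] using Nat.lt_succ_sqrt' N
          have hks : 2 * k ≤ s ∧ s ≤ 2 * k + 1 := by omega
          have h4k : 4 * k + 1 ≤ N := by nlinarith [hks.1, hks.2, hss, hs2]
          set m := N - 4*k - 1 with hmdef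
          have hmN : m < N := by omega
          have h2kN : 2 * k < N := by omega
          have h := hub N hN1 k h4k
          have hbm : g m ≤ Bb m := ih m hmN
          have hb2k : g (2*k) ≤ Bb (2*k) := ih (2*k) h2kN
          have hBm : Bb m ≤ 2 * m * Nat.sqrt m := Bb_le m
          have hB2k : Bb (2*k) ≤ 2 * (2*k) * Nat.sqrt (2*k) := Bb_le (2*k)
          have hBN : Bb N = 2 * N * s - 1 := by
            unfold Bb; rw [if_neg (by omega), if_neg (by omega)]
          set t := Nat.sqrt m with htdef
          set u := Nat.sqrt (2*k) with hudef
          have ht1 : t * t ≤ m := by rw [htdef]; simpa [pow_two] using Nat.sqrt_le' m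
          have hu1 : u * u ≤ 2 * k := by rw [hudef]; simpa [pow_two] using Nat.sqrt_le' (2*k)
          have hcore := core (N : ℤ) (s : ℤ) (k : ℤ) (m : ℤ) (t : ℤ) (u : ℤ)
            (by exact_mod_cast hs2)
            (by rcases hks with ⟨a, b⟩; omega)
            (by exact_mod_cast hss)
            (by push_cast; nlinarith [hss2])
            (by rw [hmdef]; omega)
            (by positivity) (by positivity)
            (by exact_mod_cast ht1)
            (by positivity)
            (by exact_mod_cast hu1)
          rw [hBN]
          have hcast1 : (Bb m : ℤ) ≤ 2 * (m : ℤ) * (t : ℤ) := by exact_mod_cast hBm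
          have hcast2 : (Bb (2*k) : ℤ) ≤ 2 * (2*(k:ℤ)) * (u : ℤ) := by exact_mod_cast hB2k
          have hg : g N ≤ 4 * (k : ℤ) ^ 2 + (N : ℤ) - 4 * (k : ℤ) + Bb m + 2 * Bb (2*k) := by
            linarith [h, hbm, hb2k]
          push_cast at hcast2
          calc g N ≤ 4 * (k : ℤ) ^ 2 + (N : ℤ) - 4 * (k : ℤ) + Bb m + 2 * Bb (2*k) := hg
            _ ≤ 4*(k:ℤ)^2 + (N:ℤ) - 4*(k:ℤ) + 2*(m:ℤ)*(t:ℤ) + 4*(2*(k:ℤ))*(u:ℤ) := by linarith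
            _ ≤ 2 * (N:ℤ) * (s:ℤ) - 1 := hcore
  -- conclude
  intro n hn
  have hkey := key n
  have hsq : ((Nat.sqrt n : ℝ)) ≤ Real.sqrt n := by
    have h1 : Real.sqrt ((Nat.sqrt n : ℝ) * (Nat.sqrt n : ℝ)) ≤ Real.sqrt n :=
      Real.sqrt_le_sqrt (by exact_mod_cast Nat.sqrt_le n)
    rwa [Real.sqrt_mul_self (by positivity)] at h1
  have hpow : (n : ℝ) ^ (3 / 2 : ℝ) = (n : ℝ) * Real.sqrt n := by
    rw [show (3/2 : ℝ) = 1 + 1/2 by norm_num, Real.rpow_add (by exact_mod_cast hn),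
      Real.rpow_one, ← Real.sqrt_eq_rpow]
  rw [hpow]
  have hBreal : (Bb n : ℝ) < 2 * (n : ℝ) * Real.sqrt n := by
    by_cases h3 : n = 3
    · subst h3
      have : Bb 3 = 6 := by norm_num [Bb]
      rw [this]
      have h13 : (1 : ℝ) < Real.sqrt 3 := by
        rw [show (1:ℝ) = Real.sqrt 1 by simp]
        exact Real.sqrt_lt_sqrt (by norm_num) (by norm_num)
      push_cast
      nlinarith
    · have : Bb n = 2 * n * (Nat.sqrt n) - 1 := by
        unfold Bb; rw [if_neg (by omega), if_neg h3]
      rw [this]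
      push_cast
      have h1 : (1:ℝ) ≤ (n:ℝ) := by exact_mod_cast hn
      nlinarith [hsq, Real.sqrt_nonneg (n:ℝ)]
  calc (g n : ℝ) ≤ (Bb n : ℝ) := by exact_mod_cast hkey
    _ < 2 * (n : ℝ) * Real.sqrt n := hBreal
    _ = 2 * ((n : ℝ) * Real.sqrt n) := by ring
end

section
/- Suppose N ≤ M ≤ L are positive reals and (α,β,γ) with α,β,γ ≥ 0, α+β+γ = 1 maximizes min(Nαβ/(α+β), Mαγ/(α+γ), Lβγ/(β+γ)) (with the convention that a term is 0 if its denominator is 0). Then at the maximizer, Nαβ/(α+β) = Mαγ/(α+γ) ≤ Lβγ/(β+γ). -/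
open Filter Topology

section Aux

private lemma frac_eq_aux {c x y : ℝ} (h : 0 < x + y) :
    (if x + y = 0 then (0:ℝ) else c * x * y / (x + y)) = c * x * y / (x + y) :=
  if_neg (ne_of_gt h)

private lemma tendsto_coord_aux (x u : ℝ) :
    Tendsto (fun ε : ℝ => x + u * ε) (𝓝[>] (0:ℝ)) (𝓝 x) := by
  have h : Tendsto (fun ε : ℝ => x + u * ε) (𝓝 (0:ℝ)) (𝓝 (x + u * 0)) :=
    tendsto_const_nhds.add (tendsto_const_nhds.mul tendsto_id)
  simpa using h.mono_left nhdsWithin_le_nhds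

private lemma ev_pos_aux (x u : ℝ) (hx : 0 < x) : ∀ᶠ ε in 𝓝[>] (0:ℝ), 0 < x + u * ε :=
  (tendsto_coord_aux x u).eventually (eventually_gt_nhds hx)

end Aux

/-- `c·x·y/(x+y)`, with the convention that the value is `0` when the denominator
vanishes. -/
noncomputable def frac (c x y : ℝ) : ℝ := if x + y = 0 then 0 else c * x * y / (x + y)

section Aux2

private lemma frac_eq {c x y : ℝ} (h : 0 < x + y) : frac c x y = c * x * y / (x + y) := by
  rw [frac, if_neg (ne_of_gt h)]

private lemma ev_slack (c x y u v V : ℝ) (hx : 0 < x) (hy : 0 < y) (hV : V < frac c x y) :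
    ∀ᶠ ε in 𝓝[>] (0:ℝ), V < frac c (x + u * ε) (y + v * ε) := by
  have hxy : 0 < x + y := add_pos hx hy
  have hg : Tendsto (fun ε : ℝ => c * (x + u * ε) * (y + v * ε) / ((x + u * ε) + (y + v * ε)))
      (𝓝[>] (0:ℝ)) (𝓝 (c * x * y / (x + y))) :=
    ((tendsto_const_nhds.mul (tendsto_coord_aux x u)).mul (tendsto_coord_aux y v)).div
      ((tendsto_coord_aux x u).add (tendsto_coord_aux y v)) hxy.ne'
  have hV' : V < c * x * y / (x + y) := by rwa [frac_eq hxy] at hV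
  filter_upwards [ev_pos_aux x u hx, ev_pos_aux y v hy, hg.eventually (eventually_gt_nhds hV')]
    with ε h1 h2 h3
  rwa [frac_eq (add_pos h1 h2)]

private lemma ev_deriv (c x y u v : ℝ) (hc : 0 < c) (hx : 0 < x) (hy : 0 < y)
    (hd : 0 < y ^ 2 * u + x ^ 2 * v) :
    ∀ᶠ ε in 𝓝[>] (0:ℝ), frac c x y < frac c (x + u * ε) (y + v * ε) := by
  have hxy : 0 < x + y := add_pos hx hy
  set g : ℝ → ℝ := fun ε => c * (x + u * ε) * (y + v * ε) / ((x + u * ε) + (y + v * ε))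
    with hgdef
  have h1 : HasDerivAt (fun ε : ℝ => x + u * ε) u 0 := by
    simpa using ((hasDerivAt_id (0:ℝ)).const_mul u).const_add x
  have h2 : HasDerivAt (fun ε : ℝ => y + v * ε) v 0 := by
    simpa using ((hasDerivAt_id (0:ℝ)).const_mul v).const_add y
  have hP : HasDerivAt (fun ε : ℝ => c * (x + u * ε) * (y + v * ε))
      (c * u * y + c * x * v) 0 := by
    have := (h1.const_mul c).mul h2
    simpa [Pi.mul_def] using this
  have hQ : HasDerivAt (fun ε : ℝ => (x + u * ε) + (y + v * ε)) (u + v) 0 := h1.add h2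
  have hg' : HasDerivAt g
      (((c * u * y + c * x * v) * (x + y) - c * x * y * (u + v)) / (x + y) ^ 2) 0 := by
    have := hP.div hQ (by simpa using hxy.ne')
    simpa [Pi.div_def] using this
  have hD : 0 < ((c * u * y + c * x * v) * (x + y) - c * x * y * (u + v)) / (x + y) ^ 2 := by
    have he : ((c * u * y + c * x * v) * (x + y) - c * x * y * (u + v))
        = c * (y ^ 2 * u + x ^ 2 * v) := by ring
    rw [he]
    exact div_pos (mul_pos hc hd) (pow_pos hxy 2)
  rw [hasDerivAt_iff_tendsto_slope] at hg'
  have hslope : ∀ᶠ ε in 𝓝[>] (0:ℝ), 0 < slope g 0 ε :=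
    Eventually.filter_mono (nhdsWithin_mono 0 (fun ε (hε : ε ∈ Set.Ioi (0:ℝ)) => ne_of_gt hε))
      (hg'.eventually (eventually_gt_nhds hD))
  filter_upwards [ev_pos_aux x u hx, ev_pos_aux y v hy, hslope, self_mem_nhdsWithin]
    with ε hx' hy' hs hε
  have hε0 : (0:ℝ) < ε := hε
  have hgg : g 0 < g ε := by
    have hsl : slope g 0 ε = (g ε - g 0) / ε := by rw [slope_def_field]; ring_nf
    rw [hsl] at hs
    have := mul_pos hs hε0
    rw [div_mul_cancel₀ _ (ne_of_gt hε0)] at this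
    linarith
  have hg0 : g 0 = frac c x y := by
    rw [frac_eq hxy]; simp [hgdef]
  have hgε : g ε = frac c (x + u * ε) (y + v * ε) := by
    rw [frac_eq (add_pos hx' hy')]
  rw [hg0, hgε] at hgg
  exact hgg

end Aux2

set_option maxHeartbeats 2000000 in
/-- Suppose `N ≤ M ≤ L` are positive reals and `(α,β,γ)` with
`α,β,γ ≥ 0`, `α+β+γ = 1` maximizes
`min(Nαβ/(α+β), Mαγ/(α+γ), Lβγ/(β+γ))` (a term being `0` when its denominator is `0`).
Then at the maximizer `Nαβ/(α+β) = Mαγ/(α+γ) ≤ Lβγ/(β+γ)`. -/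
theorem maximizer_equalities
    (N M L : ℝ) (hN : 0 < N) (hNM : N ≤ M) (hML : M ≤ L)
    (α β γ : ℝ) (hα : 0 ≤ α) (hβ : 0 ≤ β) (hγ : 0 ≤ γ) (hsum : α + β + γ = 1)
    (hmax : ∀ α' β' γ' : ℝ, 0 ≤ α' → 0 ≤ β' → 0 ≤ γ' → α' + β' + γ' = 1 →
      min (min (frac N α' β') (frac M α' γ')) (frac L β' γ') ≤
        min (min (frac N α β) (frac M α γ)) (frac L β γ)) :
    frac N α β = frac M α γ ∧ frac M α γ ≤ frac L β γ := by
  have hM0 : 0 < M := lt_of_lt_of_le hN hNM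
  have hL0 : 0 < L := lt_of_lt_of_le hM0 hML
  set f1 := frac N α β with hf1
  set f2 := frac M α γ with hf2
  set f3 := frac L β γ with hf3
  set V := min (min f1 f2) f3 with hVdef
  -- V is positive
  have hVpos : 0 < V := by
    have h := hmax (1/3) (1/3) (1/3) (by norm_num) (by norm_num) (by norm_num) (by norm_num)
    have e1 : frac N (1/3) (1/3) = N / 6 := by
      rw [frac_eq (by norm_num)]; ring
    have e2 : frac M (1/3) (1/3) = M / 6 := by
      rw [frac_eq (by norm_num)]; ring
    have e3 : frac L (1/3) (1/3) = L / 6 := by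
      rw [frac_eq (by norm_num)]; ring
    rw [e1, e2, e3] at h
    have h6 : 0 < min (min (N/6) (M/6)) (L/6) := by
      simp only [lt_min_iff]
      refine ⟨⟨by linarith, by linarith⟩, by linarith⟩
    linarith
  have hVf1 : V ≤ f1 := le_trans (min_le_left _ _) (min_le_left _ _)
  have hVf2 : V ≤ f2 := le_trans (min_le_left _ _) (min_le_right _ _)
  have hVf3 : V ≤ f3 := min_le_right _ _
  -- positivity of the coordinates
  have hα' : 0 < α := by
    rcases eq_or_lt_of_le hα with h | h
    · exfalso
      have : f1 = 0 := by rw [hf1, ← h]; simp [frac]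
      linarith
    · exact h
  have hβ' : 0 < β := by
    rcases eq_or_lt_of_le hβ with h | h
    · exfalso
      have : f1 = 0 := by rw [hf1, ← h]; simp [frac]
      linarith
    · exact h
  have hγ' : 0 < γ := by
    rcases eq_or_lt_of_le hγ with h | h
    · exfalso
      have : f2 = 0 := by rw [hf2, ← h]; simp [frac]
      linarith
    · exact h
  have hab : 0 < α + β := add_pos hα' hβ'
  have hag : 0 < α + γ := add_pos hα' hγ'
  have hbg : 0 < β + γ := add_pos hβ' hγ'
  -- the key improvement lemma
  have key : ∀ u v w : ℝ, u + v + w = 0 →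
      (∀ᶠ ε in 𝓝[>] (0:ℝ), V < frac N (α + u * ε) (β + v * ε)) →
      (∀ᶠ ε in 𝓝[>] (0:ℝ), V < frac M (α + u * ε) (γ + w * ε)) →
      (∀ᶠ ε in 𝓝[>] (0:ℝ), V < frac L (β + v * ε) (γ + w * ε)) → False := by
    intro u v w huvw E1 E2 E3
    obtain ⟨ε, ⟨⟨ha, hb⟩, hc', ⟨⟨hE1, hE2⟩, h3⟩⟩⟩ :=
      (((ev_pos_aux α u hα').and (ev_pos_aux β v hβ')).and
        ((ev_pos_aux γ w hγ').and ((E1.and E2).and E3))).exists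
    have hsum' : (α + u * ε) + (β + v * ε) + (γ + w * ε) = 1 := by
      have : (α + u * ε) + (β + v * ε) + (γ + w * ε) = (α + β + γ) + (u + v + w) * ε := by ring
      rw [this, hsum, huvw]; ring
    have hfeas := hmax (α + u * ε) (β + v * ε) (γ + w * ε) ha.le hb.le hc'.le hsum'
    have hlt : V < min (min (frac N (α + u * ε) (β + v * ε)) (frac M (α + u * ε) (γ + w * ε)))
        (frac L (β + v * ε) (γ + w * ε)) := by
      simp only [lt_min_iff]
      exact ⟨⟨hE1, hE2⟩, h3⟩
    linarith
  -- Fact 1: f1 cannot be strictly smallest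
  have fact1 : ¬ (f1 < f2 ∧ f1 < f3) := by
    rintro ⟨h12, h13⟩
    exact key 1 0 (-1) (by ring)
      ((ev_deriv N α β 1 0 hN hα' hβ' (by nlinarith [pow_pos hβ' 2])).mono
        (fun ε h => lt_of_le_of_lt hVf1 h))
      (ev_slack M α γ 1 (-1) V hα' hγ' (lt_of_le_of_lt hVf1 h12))
      (ev_slack L β γ 0 (-1) V hβ' hγ' (lt_of_le_of_lt hVf1 h13))
  -- Fact 2: f2 cannot be strictly smallest
  have fact2 : ¬ (f2 < f1 ∧ f2 < f3) := by
    rintro ⟨h21, h23⟩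
    exact key 1 (-1) 0 (by ring)
      (ev_slack N α β 1 (-1) V hα' hβ' (lt_of_le_of_lt hVf2 h21))
      ((ev_deriv M α γ 1 0 hM0 hα' hγ' (by nlinarith [pow_pos hγ' 2])).mono
        (fun ε h => lt_of_le_of_lt hVf2 h))
      (ev_slack L β γ (-1) 0 V hβ' hγ' (lt_of_le_of_lt hVf2 h23))
  -- Fact 3: f3 cannot be strictly smallest
  have fact3 : ¬ (f3 < f1 ∧ f3 < f2) := by
    rintro ⟨h31, h32⟩
    exact key (-1) 1 0 (by ring)
      (ev_slack N α β (-1) 1 V hα' hβ' (lt_of_le_of_lt hVf3 h31))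
      (ev_slack M α γ (-1) 0 V hα' hγ' (lt_of_le_of_lt hVf3 h32))
      ((ev_deriv L β γ 1 0 hL0 hβ' hγ' (by nlinarith [pow_pos hγ' 2])).mono
        (fun ε h => lt_of_le_of_lt hVf3 h))
  -- Fact B: cannot have f1 = f3 < f2
  have factB : ¬ (f1 = f3 ∧ f1 < f2) := by
    rintro ⟨h13, h12⟩
    rcases lt_trichotomy (α ^ 2 + γ ^ 2) (β ^ 2) with hs | hs | hs
    · -- degenerate direction impossible side: use direction (-q, -2β², 2β²+q), q = γ²-β²-α²
      refine key (-(γ^2 - β^2 - α^2)) (-(2*β^2)) (2*β^2 + (γ^2 - β^2 - α^2)) (by ring)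
        ((ev_deriv N α β (-(γ^2 - β^2 - α^2)) (-(2*β^2)) hN hα' hβ'
          (by nlinarith [mul_pos (pow_pos hβ' 2) (show (0:ℝ) < β^2 - γ^2 - α^2 by linarith)])).mono
          (fun ε h => lt_of_le_of_lt hVf1 h))
        (ev_slack M α γ (-(γ^2 - β^2 - α^2)) (2*β^2 + (γ^2 - β^2 - α^2)) V hα' hγ'
          (lt_of_le_of_lt hVf1 h12))
        ((ev_deriv L β γ (-(2*β^2)) (2*β^2 + (γ^2 - β^2 - α^2)) hL0 hβ' hγ'
          (by nlinarith [mul_pos (pow_pos hβ' 2) (show (0:ℝ) < β^2 - γ^2 - α^2 by linarith)])).mono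
          (fun ε h => lt_of_le_of_lt hVf3 h))
    · -- degenerate case: algebra shows f2 ≤ f1, contradiction
      have hαβ : α < β := by nlinarith [pow_pos hγ' 2]
      have h13' : N * α * β * (β + γ) = L * β * γ * (α + β) := by
        rw [hf1, hf3, frac_eq hab, frac_eq hbg, div_eq_div_iff (ne_of_gt hab) (ne_of_gt hbg)]
          at h13
        linarith [h13]
      have k1 : N * α * (β + γ) = L * γ * (α + β) := by
        have k1' : β * (N * α * (β + γ)) = β * (L * γ * (α + β)) := by linarith [h13']
        exact mul_left_cancel₀ (ne_of_gt hβ') k1'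
      have k2 : M * γ * (α + β) ≤ L * γ * (α + β) :=
        mul_le_mul_of_nonneg_right (mul_le_mul_of_nonneg_right hML hγ'.le) hab.le
      have k3 : N * α * (β + γ) ≤ N * β * (α + γ) := by
        nlinarith [mul_nonneg (mul_nonneg hN.le hγ'.le) (sub_nonneg.2 hαβ.le)]
      have k4 : M * γ * (α + β) ≤ N * β * (α + γ) := by linarith
      have h12' : N * α * β * (α + γ) < M * α * γ * (α + β) := by
        rw [hf1, hf2, frac_eq hab, frac_eq hag, div_lt_div_iff₀ hab hag] at h12
        linarith [h12]
      nlinarith [mul_le_mul_of_nonneg_left k4 hα'.le]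
    · -- direction (q, 2β², -2β²-q)
      refine key (γ^2 - β^2 - α^2) (2*β^2) (-(2*β^2) - (γ^2 - β^2 - α^2)) (by ring)
        ((ev_deriv N α β (γ^2 - β^2 - α^2) (2*β^2) hN hα' hβ'
          (by nlinarith [mul_pos (pow_pos hβ' 2) (show (0:ℝ) < γ^2 + α^2 - β^2 by linarith)])).mono
          (fun ε h => lt_of_le_of_lt hVf1 h))
        (ev_slack M α γ (γ^2 - β^2 - α^2) (-(2*β^2) - (γ^2 - β^2 - α^2)) V hα' hγ'
          (lt_of_le_of_lt hVf1 h12))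
        ((ev_deriv L β γ (2*β^2) (-(2*β^2) - (γ^2 - β^2 - α^2)) hL0 hβ' hγ'
          (by nlinarith [mul_pos (pow_pos hβ' 2) (show (0:ℝ) < γ^2 + α^2 - β^2 by linarith)])).mono
          (fun ε h => lt_of_le_of_lt hVf3 h))
  -- Fact C: cannot have f2 = f3 < f1
  have factC : ¬ (f2 = f3 ∧ f2 < f1) := by
    rintro ⟨h23, h21⟩
    rcases lt_trichotomy (α ^ 2 + β ^ 2) (γ ^ 2) with hs | hs | hs
    · -- direction (-r, 2γ²+r, -2γ²), r = β²-γ²-α²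
      refine key (-(β^2 - γ^2 - α^2)) (2*γ^2 + (β^2 - γ^2 - α^2)) (-(2*γ^2)) (by ring)
        (ev_slack N α β (-(β^2 - γ^2 - α^2)) (2*γ^2 + (β^2 - γ^2 - α^2)) V hα' hβ'
          (lt_of_le_of_lt hVf2 h21))
        ((ev_deriv M α γ (-(β^2 - γ^2 - α^2)) (-(2*γ^2)) hM0 hα' hγ'
          (by nlinarith [mul_pos (pow_pos hγ' 2) (show (0:ℝ) < γ^2 - β^2 - α^2 by linarith)])).mono
          (fun ε h => lt_of_le_of_lt hVf2 h))
        ((ev_deriv L β γ (2*γ^2 + (β^2 - γ^2 - α^2)) (-(2*γ^2)) hL0 hβ' hγ'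
          (by nlinarith [mul_pos (pow_pos hγ' 2) (show (0:ℝ) < γ^2 - β^2 - α^2 by linarith)])).mono
          (fun ε h => lt_of_le_of_lt hVf3 h))
    · -- degenerate: algebra shows f1 ≤ f2, contradiction (uses only N ≤ M and β < γ)
      have hβγ : β < γ := by nlinarith [pow_pos hα' 2]
      have h21' : M * α * γ * (α + β) < N * α * β * (α + γ) := by
        rw [hf1, hf2, frac_eq hab, frac_eq hag, div_lt_div_iff₀ hag hab] at h21
        linarith [h21]
      have k1 : N * β * (α + γ) ≤ M * β * (α + γ) :=
        mul_le_mul_of_nonneg_right (mul_le_mul_of_nonneg_right hNM hβ'.le) hag.le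
      have k2 : M * β * (α + γ) ≤ M * γ * (α + β) := by
        nlinarith [mul_nonneg hM0.le (mul_nonneg hα'.le (sub_nonneg.2 hβγ.le))]
      have k4 : N * β * (α + γ) ≤ M * γ * (α + β) := le_trans k1 k2
      nlinarith [mul_le_mul_of_nonneg_left k4 hα'.le]
    · -- direction (r, -2γ²-r, 2γ²)
      refine key (β^2 - γ^2 - α^2) (-(2*γ^2) - (β^2 - γ^2 - α^2)) (2*γ^2) (by ring)
        (ev_slack N α β (β^2 - γ^2 - α^2) (-(2*γ^2) - (β^2 - γ^2 - α^2)) V hα' hβ'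
          (lt_of_le_of_lt hVf2 h21))
        ((ev_deriv M α γ (β^2 - γ^2 - α^2) (2*γ^2) hM0 hα' hγ'
          (by nlinarith [mul_pos (pow_pos hγ' 2) (show (0:ℝ) < β^2 + α^2 - γ^2 by linarith)])).mono
          (fun ε h => lt_of_le_of_lt hVf2 h))
        ((ev_deriv L β γ (-(2*γ^2) - (β^2 - γ^2 - α^2)) (2*γ^2) hL0 hβ' hγ'
          (by nlinarith [mul_pos (pow_pos hγ' 2) (show (0:ℝ) < β^2 + α^2 - γ^2 by linarith)])).mono
          (fun ε h => lt_of_le_of_lt hVf3 h))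
  -- final assembly
  rcases lt_trichotomy f1 f2 with h | h | h
  · exfalso
    rcases lt_trichotomy f1 f3 with h' | h' | h'
    · exact fact1 ⟨h, h'⟩
    · exact factB ⟨h', h⟩
    · exact fact3 ⟨h', h'.trans h⟩
  · refine ⟨h, ?_⟩
    by_contra h'
    push_neg at h'
    exact fact3 ⟨by linarith, h'⟩
  · exfalso
    rcases lt_trichotomy f2 f3 with h' | h' | h'
    · exact fact2 ⟨h, h'⟩
    · exact factC ⟨h', h⟩
    · exact fact3 ⟨h'.trans h, h'⟩
end

section
/- Let 0 < μ ≤ 1 and let α, β, γ ≥ 0 with α + β + γ = 1 satisfy the constraint μ·αβ/(α+β) = αγ/(α+γ) (fractions interpreted as 0 when denominators vanish). Then αβ/(α+β) < (1/4)(1 − μ/4). -/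
/-- `x·y/(x+y)`, with the convention that the value is `0` when the denominator
vanishes. -/
noncomputable def hmean (x y : ℝ) : ℝ := if x + y = 0 then 0 else x * y / (x + y)

/-- Let `0 < μ ≤ 1` and let `α, β, γ ≥ 0` with `α + β + γ = 1` satisfy the
constraint `μ·αβ/(α+β) = αγ/(α+γ)` (fractions interpreted as `0` when denominators
vanish).  Then `αβ/(α+β) < (1/4)(1 − μ/4)`. -/
theorem key_constraint_bound
    (μ : ℝ) (hμ0 : 0 < μ) (hμ1 : μ ≤ 1)
    (α β γ : ℝ) (hα : 0 ≤ α) (hβ : 0 ≤ β) (hγ : 0 ≤ γ) (hsum : α + β + γ = 1)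
    (hconstraint : μ * hmean α β = hmean α γ) :
    hmean α β < (1 / 4) * (1 - μ / 4) := by
  have hc : (0:ℝ) < (1 / 4) * (1 - μ / 4) := by nlinarith
  by_contra hcon
  push_neg at hcon
  -- hcon : (1/4)*(1-μ/4) ≤ hmean α β
  have hab : hmean α β > 0 := lt_of_lt_of_le hc hcon
  have habne : α + β ≠ 0 := by
    intro h; rw [hmean, if_pos h] at hab; linarith
  have habpos : 0 < α + β := lt_of_le_of_ne (by linarith) (Ne.symm habne)
  have hmab : hmean α β = α * β / (α + β) := by rw [hmean, if_neg habne]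
  have hα0 : 0 < α := by
    rcases hα.lt_or_eq with h | h
    · exact h
    · exfalso; rw [hmab, ← h] at hab; simp at hab
  have hβ0 : 0 < β := by
    rcases hβ.lt_or_eq with h | h
    · exact h
    · exfalso; rw [hmab, ← h] at hab; simp at hab
  -- hmean α β ≤ (α+β)/4
  have hle : hmean α β ≤ (α + β) / 4 := by
    rw [hmab, div_le_div_iff₀ habpos (by norm_num : (0:ℝ) < 4)]
    nlinarith [sq_nonneg (α - β)]
  have hsumge : 1 - μ / 4 ≤ α + β := by nlinarith
  have hγle : γ ≤ μ / 4 := by linarith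
  have hγ0 : 0 < γ := by
    rcases hγ.lt_or_eq with h | h
    · exact h
    · exfalso
      have hz : hmean α γ = 0 := by rw [← h]; simp [hmean]
      rw [hz] at hconstraint
      nlinarith
  have hagne : α + γ ≠ 0 := by positivity
  have hmag : hmean α γ = α * γ / (α + γ) := by rw [hmean, if_neg hagne]
  have hagpos : 0 < α + γ := by positivity
  -- α < 1 - γ  since β > 0
  have hα1 : α < 1 - γ := by linarith
  have h1 : hmean α γ < γ * (1 - γ) := by
    rw [hmag, div_lt_iff₀ hagpos]
    nlinarith [mul_pos (mul_pos hγ0 hγ0) hβ0]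
  have h2 : γ * (1 - γ) ≤ (μ / 4) * (1 - μ / 4) := by nlinarith
  have h3 : μ * ((1 / 4) * (1 - μ / 4)) ≤ μ * hmean α β :=
    mul_le_mul_of_nonneg_left hcon hμ0.le
  rw [hconstraint] at h3
  nlinarith
end

section
/- For λ ∈ (0,1], the value max over γ ∈ [0,1] of min((1−2γ)γ/(1−γ), γ/(2λ)) equals 3 − 2√2 if λ ≤ (2+√2)/4, and equals (2λ−1)/(2λ(4λ−1)) if (2+√2)/4 < λ ≤ 1. -/
/-- For `λ ∈ (0,1]`, the value `max_{γ ∈ [0,1]} min((1−2γ)γ/(1−γ), γ/(2λ))`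
equals `3 − 2√2` if `λ ≤ (2+√2)/4`, and equals `(2λ−1)/(2λ(4λ−1))` if
`(2+√2)/4 < λ ≤ 1`.  (At `γ = 1` the division-by-zero convention of `ℝ` gives the first
fraction value `0`, which is a suitable interpretation there and does not affect the
maximum.) -/
theorem max_min_value (lam : ℝ) (hlam0 : 0 < lam) (hlam1 : lam ≤ 1) :
    (lam ≤ (2 + Real.sqrt 2) / 4 →
      IsGreatest {y : ℝ | ∃ γ ∈ Set.Icc (0 : ℝ) 1,
          y = min ((1 - 2 * γ) * γ / (1 - γ)) (γ / (2 * lam))}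
        (3 - 2 * Real.sqrt 2)) ∧
    ((2 + Real.sqrt 2) / 4 < lam →
      IsGreatest {y : ℝ | ∃ γ ∈ Set.Icc (0 : ℝ) 1,
          y = min ((1 - 2 * γ) * γ / (1 - γ)) (γ / (2 * lam))}
        ((2 * lam - 1) / (2 * lam * (4 * lam - 1)))) := by
  have hs2 : Real.sqrt 2 ^ 2 = 2 := Real.sq_sqrt (by norm_num)
  have hs0 : 0 ≤ Real.sqrt 2 := Real.sqrt_nonneg 2
  have hs1 : 1 < Real.sqrt 2 := by nlinarith
  have hs15 : Real.sqrt 2 < 1.5 := by nlinarith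
  set s := Real.sqrt 2 with hsdef
  constructor
  · intro hle
    constructor
    · refine ⟨1 - s / 2, ⟨by linarith, by linarith⟩, ?_⟩
      have hf : (1 - 2 * (1 - s / 2)) * (1 - s / 2) / (1 - (1 - s / 2)) = 3 - 2 * s := by
        rw [show (1 : ℝ) - (1 - s / 2) = s / 2 by ring,
          div_eq_iff (by linarith : (s : ℝ) / 2 ≠ 0)]
        nlinarith
      rw [hf, min_eq_left]
      rw [le_div_iff₀ (by linarith : (0:ℝ) < 2 * lam)]
      nlinarith
    · rintro y ⟨γ, ⟨hγ0, hγ1⟩, rfl⟩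
      refine le_trans (min_le_left _ _) ?_
      rcases eq_or_lt_of_le hγ1 with h | h
      · rw [h]
        norm_num
        linarith
      · rw [div_le_iff₀ (by linarith : (0:ℝ) < 1 - γ)]
        nlinarith [sq_nonneg (γ - (1 - s / 2))]
  · intro hgt
    have hl34 : (3:ℝ) / 4 < lam := by linarith
    have h2l : (0:ℝ) < 2 * lam - 1 := by linarith
    have h4l : (0:ℝ) < 4 * lam - 1 := by linarith
    have hkey : 0 < 8 * lam ^ 2 - 8 * lam + 1 := by
      nlinarith [mul_pos (show (0:ℝ) < lam - (2 + s) / 4 by linarith)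
        (show (0:ℝ) < lam - (2 - s) / 4 by linarith)]
    set γs : ℝ := (2 * lam - 1) / (4 * lam - 1) with hγsdef
    have hγs0 : 0 < γs := div_pos h2l h4l
    have hγs1 : γs < 1 := by
      rw [div_lt_one h4l]; linarith
    have hM : (0:ℝ) < 2 * lam * (4 * lam - 1) := by positivity
    constructor
    · refine ⟨γs, ⟨le_of_lt hγs0, le_of_lt hγs1⟩, ?_⟩
      have hg : γs / (2 * lam) = (2 * lam - 1) / (2 * lam * (4 * lam - 1)) := by
        rw [hγsdef, div_div, mul_comm (4 * lam - 1) (2 * lam)]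
      have hf : (1 - 2 * γs) * γs / (1 - γs) = (2 * lam - 1) / (2 * lam * (4 * lam - 1)) := by
        have h1γ : (0:ℝ) < 1 - γs := by linarith
        rw [div_eq_div_iff (by linarith : (1:ℝ) - γs ≠ 0) (ne_of_gt hM), hγsdef]
        have e : (2 * lam - 1) / (4 * lam - 1) * (4 * lam - 1) = 2 * lam - 1 :=
          div_mul_cancel₀ _ (ne_of_gt h4l)
        linear_combination (2 * lam - 4 * lam * ((2 * lam - 1) / (4 * lam - 1)) - (2 * lam - 1)) * e
      rw [hf, hg, min_self]
    · rintro y ⟨γ, ⟨hγ0, hγ1⟩, rfl⟩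
      rcases le_or_gt γ γs with hcase | hcase
      · refine le_trans (min_le_right _ _) ?_
        have hγb : γ * (4 * lam - 1) ≤ 2 * lam - 1 := by
          have := hcase
          rw [hγsdef, le_div_iff₀ h4l] at this
          linarith
        rw [div_le_div_iff₀ (by linarith : (0:ℝ) < 2 * lam) hM]
        nlinarith
      · refine le_trans (min_le_left _ _) ?_
        have hγge : 0 ≤ (4 * lam - 1) * γ - (2 * lam - 1) := by
          have := hcase
          rw [hγsdef, div_lt_iff₀ h4l] at this
          linarith
        rcases eq_or_lt_of_le hγ1 with h | h
        · rw [h]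
          norm_num
          positivity
        · have h4g : 0 ≤ 4 * lam * γ - 1 := by
            nlinarith [mul_nonneg hγge hlam0.le]
          rw [div_le_div_iff₀ (by linarith : (0:ℝ) < 1 - γ) hM]
          nlinarith [mul_nonneg h4g hγge]
end
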